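/- arXiv:1211.7084 — 8 statements merged into one kernel-verified Lean document; each statement's English description precedes it below -/
import Mathlib

section
/- There exists exactly one admissible vector v* ∈ ℝ^d; moreover the function L̂ attains its global minimum at a unique point, and this unique minimizer coincides with v*. (Theorem 1 of the paper, finite-index case: uniqueness of the admissible velocity.) -/
open scoped InnerProductSpace

noncomputable section

/-- The lower envelope `Φ(v) = min_{i∈𝕀} (−H_i + ⟨p_i, v⟩)`. -/
def lowerEnv {d : ℕ} {ι : Type} [Fintype ι] [Nonempty ι]
    (p : ι → EuclideanSpace ℝ (Fin d)) (H : ι → ℝ)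
    (v : EuclideanSpace ℝ (Fin d)) : ℝ :=
  Finset.univ.inf' Finset.univ_nonempty fun i => -H i + ⟪p i, v⟫_ℝ

/-- The set `I(v)` of indices where the minimum defining `Φ(v)` is attained. -/
def activeSet {d : ℕ} {ι : Type} [Fintype ι] [Nonempty ι]
    (p : ι → EuclideanSpace ℝ (Fin d)) (H : ι → ℝ)
    (v : EuclideanSpace ℝ (Fin d)) : Set ι :=
  {j | -H j + ⟪p j, v⟫_ℝ = lowerEnv p H v}

/-- `v` is admissible if `∇L(v)` lies in the convex hull of the active momenta. -/
def IsAdmissible {d : ℕ} {ι : Type} [Fintype ι] [Nonempty ι]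
    (L : EuclideanSpace ℝ (Fin d) → ℝ)
    (p : ι → EuclideanSpace ℝ (Fin d)) (H : ι → ℝ)
    (v : EuclideanSpace ℝ (Fin d)) : Prop :=
  gradient L v ∈ convexHull ℝ (p '' activeSet p H v)

variable {d : ℕ}

lemma hasDerivAt_line (L : EuclideanSpace ℝ (Fin d) → ℝ) (hdiff : Differentiable ℝ L)
    (v u : EuclideanSpace ℝ (Fin d)) :
    HasDerivAt (fun t : ℝ => L (v + t • u)) (⟪gradient L v, u⟫_ℝ) 0 := by
  have h1 : HasDerivAt (fun t : ℝ => v + t • u) u 0 := by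
    simpa using ((hasDerivAt_id (0 : ℝ)).smul_const u).const_add v
  have h2 : HasFDerivAt L (fderiv ℝ L v) (v + (0 : ℝ) • u) := by
    simpa using (hdiff v).hasFDerivAt
  have h3 := h2.comp_hasDerivAt (0 : ℝ) h1
  have h4 : ⟪gradient L v, u⟫_ℝ = fderiv ℝ L v u := by
    simp [gradient, InnerProductSpace.toDual_symm_apply]
  rw [h4]; exact h3

lemma grad_strict_ineq (L : EuclideanSpace ℝ (Fin d) → ℝ)
    (hdiff : Differentiable ℝ L) (hconv : StrictConvexOn ℝ Set.univ L)
    {v w : EuclideanSpace ℝ (Fin d)} (hvw : w ≠ v) :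
    L v + ⟪gradient L v, w - v⟫_ℝ < L w := by
  set u := w - v with hu_def
  have hu : u ≠ 0 := sub_ne_zero.2 hvw
  set ψ : ℝ → ℝ := fun t => L (v + t • u) with hψ
  have hψconv : StrictConvexOn ℝ Set.univ ψ := by
    refine ⟨convex_univ, ?_⟩
    intro s _ t _ hst a b ha hb hab
    have hpt : v + (a * s + b * t) • u = a • (v + s • u) + b • (v + t • u) := by
      have : a • v + b • v = v := by rw [← add_smul, hab, one_smul]
      rw [smul_add, smul_add, smul_smul, smul_smul, add_add_add_comm, this, add_smul]
    have hne : v + s • u ≠ v + t • u := by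
      intro h
      apply hst
      have h2 : s • u = t • u := add_left_cancel h
      have h3 : (s - t) • u = 0 := by rw [sub_smul, h2, sub_self]
      rcases smul_eq_zero.1 h3 with h4 | h4
      · exact sub_eq_zero.1 h4
      · exact absurd h4 hu
    have := hconv.2 (Set.mem_univ (v + s • u)) (Set.mem_univ (v + t • u)) hne ha hb hab
    simpa [hψ, smul_eq_mul, hpt] using this
  have hd : HasDerivAt ψ (⟪gradient L v, u⟫_ℝ) 0 := hasDerivAt_line L hdiff v u
  have hslope := hψconv.lt_slope_of_hasDerivAt (Set.mem_univ (0:ℝ)) (Set.mem_univ (1:ℝ))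
    one_pos hd
  have h0 : ψ 0 = L v := by simp [hψ]
  have h1 : ψ 1 = L w := by simp [hψ, hu_def]
  rw [slope_def_field, h0, h1] at hslope
  have : ⟪gradient L v, u⟫_ℝ < L w - L v := by simpa using hslope
  linarith

/-- An admissible point is a strict global minimizer of `L - lowerEnv`. -/
lemma adm_strict_min {ι : Type} [Fintype ι] [Nonempty ι]
    (L : EuclideanSpace ℝ (Fin d) → ℝ)
    (hdiff : Differentiable ℝ L) (hconv : StrictConvexOn ℝ Set.univ L)
    (p : ι → EuclideanSpace ℝ (Fin d)) (H : ι → ℝ)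
    (v : EuclideanSpace ℝ (Fin d)) (hadm : IsAdmissible L p H v) :
    ∀ w, w ≠ v → L v - lowerEnv p H v < L w - lowerEnv p H w := by
  intro w hw
  have hlin : IsLinearMap ℝ (fun q : EuclideanSpace ℝ (Fin d) => ⟪q, w - v⟫_ℝ) :=
    ⟨fun a b => inner_add_left a b _, fun c a => real_inner_smul_left a _ c⟩
  have hconvset : Convex ℝ {q : EuclideanSpace ℝ (Fin d) |
      lowerEnv p H w - lowerEnv p H v ≤ ⟪q, w - v⟫_ℝ} :=
    convex_halfSpace_ge hlin _
  have hset : p '' activeSet p H v ⊆ {q : EuclideanSpace ℝ (Fin d) |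
      lowerEnv p H w - lowerEnv p H v ≤ ⟪q, w - v⟫_ℝ} := by
    rintro _ ⟨j, hj, rfl⟩
    have h1 : lowerEnv p H w ≤ -H j + ⟪p j, w⟫_ℝ :=
      Finset.inf'_le _ (Finset.mem_univ j)
    have h2 : -H j + ⟪p j, v⟫_ℝ = lowerEnv p H v := hj
    have h3 : ⟪p j, w - v⟫_ℝ = ⟪p j, w⟫_ℝ - ⟪p j, v⟫_ℝ := inner_sub_right _ _ _
    simp only [Set.mem_setOf_eq, h3]
    linarith
  have hkey : lowerEnv p H w - lowerEnv p H v ≤ ⟪gradient L v, w - v⟫_ℝ :=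
    convexHull_min hset hconvset hadm
  have hgrad := grad_strict_ineq L hdiff hconv hw
  linarith

/-- A global minimizer of `L - lowerEnv` is admissible. -/
lemma min_adm {ι : Type} [Fintype ι] [Nonempty ι]
    (L : EuclideanSpace ℝ (Fin d) → ℝ)
    (hdiff : Differentiable ℝ L)
    (p : ι → EuclideanSpace ℝ (Fin d)) (H : ι → ℝ)
    (v : EuclideanSpace ℝ (Fin d))
    (hmin : ∀ w, L v - lowerEnv p H v ≤ L w - lowerEnv p H w) :
    IsAdmissible L p H v := by
  by_contra hq
  have hKconv : Convex ℝ (convexHull ℝ (p '' activeSet p H v)) := convex_convexHull ℝ _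
  have hKcl : IsClosed (convexHull ℝ (p '' activeSet p H v)) :=
    ((Set.toFinite (activeSet p H v)).image p).isCompact_convexHull (𝕜 := ℝ) |>.isClosed
  have hq' : gradient L v ∉ convexHull ℝ (p '' activeSet p H v) := hq
  obtain ⟨f, c, hfc, hKsep⟩ := geometric_hahn_banach_point_closed hKconv hKcl hq'
  set u : EuclideanSpace ℝ (Fin d) :=
    (InnerProductSpace.toDual ℝ (EuclideanSpace ℝ (Fin d))).symm f with hu
  have hfu : ∀ x, ⟪u, x⟫_ℝ = f x := fun x => InnerProductSpace.toDual_symm_apply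
  -- the envelope bound, eventually as t → 0+
  have hEnv : ∀ᶠ t in nhdsWithin (0:ℝ) (Set.Ioi 0),
      ∀ j : ι, lowerEnv p H v + t * c ≤ -H j + ⟪p j, v + t • u⟫_ℝ := by
    rw [Filter.eventually_all]
    intro j
    have hinner : ∀ t : ℝ, ⟪p j, v + t • u⟫_ℝ = ⟪p j, v⟫_ℝ + t * ⟪p j, u⟫_ℝ := by
      intro t
      rw [inner_add_right, real_inner_smul_right]
    by_cases hact : j ∈ activeSet p H v
    · have hcj : c < ⟪p j, u⟫_ℝ := by
        rw [real_inner_comm, hfu]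
        exact hKsep _ (subset_convexHull ℝ _ ⟨j, hact, rfl⟩)
      filter_upwards [self_mem_nhdsWithin] with t ht
      have ht' : (0:ℝ) < t := ht
      have hj : -H j + ⟪p j, v⟫_ℝ = lowerEnv p H v := hact
      rw [hinner]
      nlinarith
    · have hstrict : lowerEnv p H v < -H j + ⟪p j, v⟫_ℝ :=
        lt_of_le_of_ne (Finset.inf'_le _ (Finset.mem_univ j)) (Ne.symm hact)
      have hcont : ContinuousAt
          (fun t : ℝ => -H j + ⟪p j, v⟫_ℝ + t * ⟪p j, u⟫_ℝ - (lowerEnv p H v + t * c)) 0 := by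
        fun_prop
      have h0 : (0:ℝ) < -H j + ⟪p j, v⟫_ℝ + (0:ℝ) * ⟪p j, u⟫_ℝ - (lowerEnv p H v + (0:ℝ) * c) := by
        simp only [zero_mul, add_zero]
        linarith
      have hev : ∀ᶠ t in nhds (0:ℝ), (0:ℝ) <
          -H j + ⟪p j, v⟫_ℝ + t * ⟪p j, u⟫_ℝ - (lowerEnv p H v + t * c) :=
        hcont.eventually (eventually_gt_nhds h0)
      have hev' := hev.filter_mono (nhdsWithin_le_nhds (s := Set.Ioi (0:ℝ)))
      filter_upwards [hev'] with t ht
      rw [hinner]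
      linarith
  -- derivative bound, eventually as t → 0+
  have hqc : ⟪gradient L v, u⟫_ℝ < c := by
    rw [real_inner_comm, hfu]
    exact hfc
  have hL := hasDerivAt_line L hdiff v u
  have hslope := hasDerivAt_iff_tendsto_slope.1 hL
  have hlt : ∀ᶠ t in nhdsWithin (0:ℝ) {(0:ℝ)}ᶜ,
      slope (fun t : ℝ => L (v + t • u)) 0 t < c :=
    hslope.eventually_lt_const hqc
  have hmono : nhdsWithin (0:ℝ) (Set.Ioi 0) ≤ nhdsWithin (0:ℝ) {(0:ℝ)}ᶜ :=
    nhdsWithin_mono 0 (fun x hx => ne_of_gt hx)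
  have hlt' := hlt.filter_mono hmono
  have hfinal : ∀ᶠ t in nhdsWithin (0:ℝ) (Set.Ioi 0), False := by
    filter_upwards [hEnv, hlt', self_mem_nhdsWithin] with t henv hslopet ht
    have ht' : (0:ℝ) < t := ht
    have hLt : L (v + t • u) < L v + t * c := by
      have heq : slope (fun t : ℝ => L (v + t • u)) 0 t
          = (L (v + t • u) - L v) / t := by
        simp [slope_def_field]
      rw [heq] at hslopet
      have := (div_lt_iff₀ ht').1 hslopet
      linarith
    have hEnvLow : lowerEnv p H v + t * c ≤ lowerEnv p H (v + t • u) := by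
      apply Finset.le_inf'
      intro j _
      exact henv j
    have := hmin (v + t • u)
    linarith
  exact hfinal.exists.elim (fun _ h => h)

/-- Theorem 1 (finite case): there is exactly one admissible velocity, and it is the
unique global minimizer of `L̂(v) = L(v) − Φ(v)`. -/
theorem unique_admissible_velocity {d : ℕ} (hd : 1 ≤ d)
    {ι : Type} [Fintype ι] [Nonempty ι]
    (L : EuclideanSpace ℝ (Fin d) → ℝ)
    (hdiff : Differentiable ℝ L)
    (hconv : StrictConvexOn ℝ Set.univ L)
    (hsuper : Filter.Tendsto (fun v => L v / ‖v‖)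
      (Filter.comap (fun v : EuclideanSpace ℝ (Fin d) => ‖v‖) Filter.atTop) Filter.atTop)
    (p : ι → EuclideanSpace ℝ (Fin d)) (H : ι → ℝ) :
    ∃ vstar : EuclideanSpace ℝ (Fin d),
      IsAdmissible L p H vstar ∧
      (∀ v, IsAdmissible L p H v → v = vstar) ∧
      (∀ v, v ≠ vstar →
        L vstar - lowerEnv p H vstar < L v - lowerEnv p H v) := by
  have hΦcont : Continuous (fun v : EuclideanSpace ℝ (Fin d) => lowerEnv p H v) := by
    unfold lowerEnv
    exact Continuous.finset_inf'_apply _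
      (fun i _ => continuous_const.add (Continuous.inner continuous_const continuous_id))
  have hfcont : Continuous (fun v : EuclideanSpace ℝ (Fin d) => L v - lowerEnv p H v) :=
    hdiff.continuous.sub hΦcont
  obtain ⟨i0⟩ := (inferInstance : Nonempty ι)
  have hcoer : Filter.Tendsto (fun v : EuclideanSpace ℝ (Fin d) => L v - lowerEnv p H v)
      (Filter.comap (fun v : EuclideanSpace ℝ (Fin d) => ‖v‖) Filter.atTop) Filter.atTop := by
    rw [Filter.tendsto_atTop]
    intro M
    set C := max (M - H i0) 0 with hC
    have hC0 : 0 ≤ C := le_max_right _ _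
    have hCM : M - H i0 ≤ C := le_max_left _ _
    have h1 : ∀ᶠ v : EuclideanSpace ℝ (Fin d) in
        Filter.comap (fun v : EuclideanSpace ℝ (Fin d) => ‖v‖) Filter.atTop, (1:ℝ) ≤ ‖v‖ :=
      Filter.tendsto_comap.eventually (Filter.eventually_ge_atTop 1)
    have h2 : ∀ᶠ v : EuclideanSpace ℝ (Fin d) in
        Filter.comap (fun v : EuclideanSpace ℝ (Fin d) => ‖v‖) Filter.atTop,
        ‖p i0‖ + C ≤ L v / ‖v‖ :=
      hsuper.eventually (Filter.eventually_ge_atTop _)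
    filter_upwards [h1, h2] with v hv1 hv2
    have hvpos : (0:ℝ) < ‖v‖ := lt_of_lt_of_le one_pos hv1
    have hLlow : (‖p i0‖ + C) * ‖v‖ ≤ L v := (le_div_iff₀ hvpos).1 hv2
    have hΦup : lowerEnv p H v ≤ -H i0 + ‖p i0‖ * ‖v‖ := by
      refine le_trans (Finset.inf'_le _ (Finset.mem_univ i0)) ?_
      have := real_inner_le_norm (p i0) v
      linarith
    have hCv : C * 1 ≤ C * ‖v‖ := by nlinarith
    nlinarith
  have hcoer' : ∀ᶠ v : EuclideanSpace ℝ (Fin d) in Filter.cocompact (EuclideanSpace ℝ (Fin d)),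
      L 0 - lowerEnv p H 0 ≤ L v - lowerEnv p H v := by
    have heq : Filter.comap (fun v : EuclideanSpace ℝ (Fin d) => ‖v‖) Filter.atTop
        = Filter.cocompact (EuclideanSpace ℝ (Fin d)) := by
      rw [comap_norm_atTop, Metric.cobounded_eq_cocompact]
    rw [← heq]
    exact hcoer.eventually (Filter.eventually_ge_atTop _)
  obtain ⟨vstar, hvstar⟩ := hfcont.exists_forall_le' (0 : EuclideanSpace ℝ (Fin d)) hcoer'
  have hadm : IsAdmissible L p H vstar := min_adm L hdiff p H vstar hvstar
  have hstrict := adm_strict_min L hdiff hconv p H vstar hadm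
  refine ⟨vstar, hadm, ?_, hstrict⟩
  intro v hv
  by_contra hne
  have h1 := adm_strict_min L hdiff hconv p H v hv vstar (Ne.symm hne)
  have h2 := hstrict v hne
  linarith
end
end

section
/- If v* is a point of global minimum of L̂, then v* is admissible, i.e. ∇L(v*) belongs to the convex hull of {p_j : j ∈ I(v*)}. -/
open scoped InnerProductSpace

noncomputable section

/-- First-order condition at a minimizer: for every direction `u` there is an
active index `j` with `⟪p j, u⟫ ≤ ⟪∇L(v*), u⟫`. -/
theorem key_dir {d : ℕ} {ι : Type} [Fintype ι] [Nonempty ι]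
    (L : EuclideanSpace ℝ (Fin d) → ℝ)
    (hdiff : Differentiable ℝ L)
    (p : ι → EuclideanSpace ℝ (Fin d)) (H : ι → ℝ)
    (vstar : EuclideanSpace ℝ (Fin d))
    (hmin : ∀ v, L vstar - lowerEnv p H vstar ≤ L v - lowerEnv p H v)
    (u : EuclideanSpace ℝ (Fin d)) :
    ∃ j ∈ activeSet p H vstar, ⟪p j, u⟫_ℝ ≤ ⟪gradient L vstar, u⟫_ℝ := by
  classical
  set Φ0 := lowerEnv p H vstar with hΦ0
  set T : Finset ι := (Set.toFinite (activeSet p H vstar)).toFinset with hT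
  have hTne : T.Nonempty := by
    obtain ⟨j, _, hj⟩ := Finset.exists_mem_eq_inf' (Finset.univ_nonempty (α := ι))
      (fun i => -H i + ⟪p i, vstar⟫_ℝ)
    refine ⟨j, ?_⟩
    rw [hT, Set.Finite.mem_toFinset]
    exact hj.symm
  set m : ℝ := T.inf' hTne (fun j => ⟪p j, u⟫_ℝ) with hm
  -- derivative of t ↦ L (vstar + t • u) at 0
  have hline : HasDerivAt (fun t : ℝ => vstar + t • u) u 0 := by
    simpa using ((hasDerivAt_id (0:ℝ)).smul_const u).const_add vstar
  have hder : HasDerivAt (fun t : ℝ => L (vstar + t • u)) ⟪gradient L vstar, u⟫_ℝ 0 := by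
    have hL : HasFDerivAt L (fderiv ℝ L vstar) (vstar + (0:ℝ) • u) := by
      simpa using (hdiff vstar).hasFDerivAt
    have hc := hL.comp_hasDerivAt 0 hline
    have heq : ⟪gradient L vstar, u⟫_ℝ = fderiv ℝ L vstar u :=
      InnerProductSpace.toDual_symm_apply
    rw [heq]
    exact hc
  -- eventual bound on the lower envelope
  have hbound : ∀ᶠ t in nhdsWithin (0:ℝ) (Set.Ioi 0),
      Φ0 + t * m ≤ lowerEnv p H (vstar + t • u) := by
    have hall : ∀ i : ι, ∀ᶠ t in nhdsWithin (0:ℝ) (Set.Ioi 0),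
        Φ0 + t * m ≤ -H i + ⟪p i, vstar + t • u⟫_ℝ := by
      intro i
      have hinner : ∀ t : ℝ, (-H i + ⟪p i, vstar + t • u⟫_ℝ)
          = (-H i + ⟪p i, vstar⟫_ℝ) + t * ⟪p i, u⟫_ℝ := by
        intro t
        rw [inner_add_right, real_inner_smul_right]; ring
      have hle : Φ0 ≤ -H i + ⟪p i, vstar⟫_ℝ :=
        Finset.inf'_le _ (Finset.mem_univ i)
      rcases eq_or_lt_of_le hle with heq | hlt
      · -- active index: m ≤ ⟪p i, u⟫
        have hiT : i ∈ T := by rw [hT, Set.Finite.mem_toFinset]; exact heq.symm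
        have hmle : m ≤ ⟪p i, u⟫_ℝ := Finset.inf'_le _ hiT
        filter_upwards [self_mem_nhdsWithin] with t ht
        rw [hinner, ← heq]
        have : t * m ≤ t * ⟪p i, u⟫_ℝ :=
          mul_le_mul_of_nonneg_left hmle (le_of_lt ht)
        linarith
      · -- inactive index: strict inequality survives for small t
        have h1 : Filter.Tendsto (fun t : ℝ => Φ0 + t * m)
            (nhdsWithin 0 (Set.Ioi 0)) (nhds Φ0) := by
          have : Filter.Tendsto (fun t : ℝ => Φ0 + t * m) (nhds 0) (nhds (Φ0 + 0 * m)) := by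
            exact (continuous_const.add (continuous_id.mul continuous_const)).tendsto 0
          simpa using this.mono_left nhdsWithin_le_nhds
        have h2 : Filter.Tendsto (fun t : ℝ => (-H i + ⟪p i, vstar⟫_ℝ) + t * ⟪p i, u⟫_ℝ)
            (nhdsWithin 0 (Set.Ioi 0)) (nhds (-H i + ⟪p i, vstar⟫_ℝ)) := by
          have : Filter.Tendsto (fun t : ℝ => (-H i + ⟪p i, vstar⟫_ℝ) + t * ⟪p i, u⟫_ℝ)
              (nhds 0) (nhds ((-H i + ⟪p i, vstar⟫_ℝ) + 0 * ⟪p i, u⟫_ℝ)) :=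
            (continuous_const.add (continuous_id.mul continuous_const)).tendsto 0
          simpa using this.mono_left nhdsWithin_le_nhds
        filter_upwards [h1.eventually_lt h2 hlt] with t ht
        rw [hinner]; exact le_of_lt ht
    have := (Filter.eventually_all (ι := ι)).2 hall
    filter_upwards [this] with t ht
    exact Finset.le_inf' _ _ fun i _ => ht i
  -- slope bound
  have hslope : ∀ᶠ t in nhdsWithin (0:ℝ) (Set.Ioi 0),
      m ≤ slope (fun t : ℝ => L (vstar + t • u)) 0 t := by
    filter_upwards [hbound, self_mem_nhdsWithin] with t hb ht
    have ht' : (0:ℝ) < t := ht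
    have hmin' := hmin (vstar + t • u)
    have : t * m ≤ L (vstar + t • u) - L vstar := by
      have : Φ0 + t * m - Φ0 ≤ lowerEnv p H (vstar + t • u) - Φ0 := by linarith
      linarith
    rw [slope_def_field]
    have : m ≤ (L (vstar + t • u) - L (vstar + 0 • u)) / t := by
      rw [le_div_iff₀ ht']; simpa [mul_comm] using this
    simpa [div_eq_inv_mul] using this
  have htend : Filter.Tendsto (slope (fun t : ℝ => L (vstar + t • u)) 0)
      (nhdsWithin 0 (Set.Ioi 0)) (nhds ⟪gradient L vstar, u⟫_ℝ) :=
    (hasDerivAt_iff_tendsto_slope.mp hder).mono_left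
      (nhdsWithin_mono 0 fun x hx => ne_of_gt hx)
  have hfinal : m ≤ ⟪gradient L vstar, u⟫_ℝ := ge_of_tendsto htend hslope
  obtain ⟨j, hjT, hj⟩ := Finset.exists_mem_eq_inf' hTne (fun j => ⟪p j, u⟫_ℝ)
  refine ⟨j, by rw [hT, Set.Finite.mem_toFinset] at hjT; exact hjT, ?_⟩
  have hjm : ⟪p j, u⟫_ℝ = m := hj.symm
  rw [hjm]
  exact hfinal

/-- A point of global minimum of `L̂(v) = L(v) − Φ(v)` is admissible. -/
theorem min_of_Lhat_isAdmissible {d : ℕ} (hd : 1 ≤ d)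
    {ι : Type} [Fintype ι] [Nonempty ι]
    (L : EuclideanSpace ℝ (Fin d) → ℝ)
    (hdiff : Differentiable ℝ L)
    (hconv : StrictConvexOn ℝ Set.univ L)
    (hsuper : Filter.Tendsto (fun v => L v / ‖v‖)
      (Filter.comap (fun v : EuclideanSpace ℝ (Fin d) => ‖v‖) Filter.atTop) Filter.atTop)
    (p : ι → EuclideanSpace ℝ (Fin d)) (H : ι → ℝ)
    (vstar : EuclideanSpace ℝ (Fin d))
    (hmin : ∀ v, L vstar - lowerEnv p H vstar ≤ L v - lowerEnv p H v) :
    IsAdmissible L p H vstar := by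
  by_contra hna
  set K := p '' activeSet p H vstar with hK
  have hKfin : K.Finite := (Set.toFinite _).image p
  have hclosed : IsClosed (convexHull ℝ K) := hKfin.isClosed_convexHull (𝕜 := ℝ)
  obtain ⟨f, c, hfs, hfb⟩ :=
    geometric_hahn_banach_point_closed (convex_convexHull ℝ K) hclosed hna
  set u := (InnerProductSpace.toDual ℝ (EuclideanSpace ℝ (Fin d))).symm f with hu
  have hinner : ∀ w, ⟪u, w⟫_ℝ = f w := fun w => InnerProductSpace.toDual_symm_apply
  obtain ⟨j, hjI, hj⟩ := key_dir L hdiff p H vstar hmin u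
  have h1 : c < f (p j) := hfb _ (subset_convexHull ℝ K ⟨j, hjI, rfl⟩)
  have h2 : ⟪p j, u⟫_ℝ = f (p j) := by rw [real_inner_comm]; exact hinner _
  have h3 : ⟪gradient L vstar, u⟫_ℝ = f (gradient L vstar) := by
    rw [real_inner_comm]; exact hinner _
  rw [h2, h3] at hj
  linarith
end
end

section
/- If v̂ is admissible, then v̂ is a point of strict global minimum of L̂: for every h ∈ ℝ^d with h ≠ 0 one has L̂(v̂ + h) > L̂(v̂). -/
open scoped InnerProductSpace

noncomputable section

/-- An admissible point is a strict global minimizer of `L̂(v) = L(v) − Φ(v)`. -/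
theorem isAdmissible_strict_min {d : ℕ} (hd : 1 ≤ d)
    {ι : Type} [Fintype ι] [Nonempty ι]
    (L : EuclideanSpace ℝ (Fin d) → ℝ)
    (hdiff : Differentiable ℝ L)
    (hconv : StrictConvexOn ℝ Set.univ L)
    (hsuper : Filter.Tendsto (fun v => L v / ‖v‖)
      (Filter.comap (fun v : EuclideanSpace ℝ (Fin d) => ‖v‖) Filter.atTop) Filter.atTop)
    (p : ι → EuclideanSpace ℝ (Fin d)) (H : ι → ℝ)
    (vhat : EuclideanSpace ℝ (Fin d))
    (hadm : IsAdmissible L p H vhat) :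
    ∀ h : EuclideanSpace ℝ (Fin d), h ≠ 0 →
      L vhat - lowerEnv p H vhat < L (vhat + h) - lowerEnv p H (vhat + h) := by
  intro h hne
  set q := gradient L vhat with hq
  -- Step 1: envelope inequality  Φ(v̂+h) ≤ Φ(v̂) + ⟪q, h⟫
  have hΦ : lowerEnv p H (vhat + h) ≤ lowerEnv p H vhat + ⟪q, h⟫_ℝ := by
    have hlin : IsLinearMap ℝ (fun w : EuclideanSpace ℝ (Fin d) => ⟪w, h⟫_ℝ) :=
      ⟨fun a b => inner_add_left a b h, fun c a => real_inner_smul_left a h c⟩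
    have hcvx : Convex ℝ {w : EuclideanSpace ℝ (Fin d) |
        lowerEnv p H (vhat + h) - lowerEnv p H vhat ≤ ⟪w, h⟫_ℝ} :=
      convex_halfSpace_ge hlin _
    have hsub : p '' activeSet p H vhat ⊆ {w : EuclideanSpace ℝ (Fin d) |
        lowerEnv p H (vhat + h) - lowerEnv p H vhat ≤ ⟪w, h⟫_ℝ} := by
      rintro - ⟨j, hj, rfl⟩
      have h1 : lowerEnv p H (vhat + h) ≤ -H j + ⟪p j, vhat + h⟫_ℝ :=
        Finset.inf'_le _ (Finset.mem_univ j)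
      have h2 : -H j + ⟪p j, vhat⟫_ℝ = lowerEnv p H vhat := hj
      have h3 : ⟪p j, vhat + h⟫_ℝ = ⟪p j, vhat⟫_ℝ + ⟪p j, h⟫_ℝ := inner_add_right _ _ _
      have h4 : ⟪p j, h⟫_ℝ = ⟪(p j : EuclideanSpace ℝ (Fin d)), h⟫_ℝ := rfl
      simp only [Set.mem_setOf_eq]
      linarith
    have : q ∈ {w : EuclideanSpace ℝ (Fin d) |
        lowerEnv p H (vhat + h) - lowerEnv p H vhat ≤ ⟪w, h⟫_ℝ} :=
      convexHull_min hsub hcvx hadm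
    have := this
    simp only [Set.mem_setOf_eq] at this
    linarith
  -- Step 2: strict gradient inequality  L(v̂+h) > L(v̂) + ⟪q, h⟫
  have hL : L vhat + ⟪q, h⟫_ℝ < L (vhat + h) := by
    set g : ℝ → ℝ := fun t => L (vhat + t • h) with hg
    have hgconv : StrictConvexOn ℝ (Set.univ : Set ℝ) g := by
      refine ⟨convex_univ, ?_⟩
      intro x _ y _ hxy a b ha hb hab
      have hne' : vhat + x • h ≠ vhat + y • h := by
        intro hcon
        apply hxy
        have := add_left_cancel hcon
        have hxy' : (x - y) • h = 0 := by rw [sub_smul, this, sub_self]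
        rcases smul_eq_zero.mp hxy' with h1 | h1
        · exact sub_eq_zero.mp h1
        · exact absurd h1 hne
      have key : vhat + (a * x + b * y) • h
          = a • (vhat + x • h) + b • (vhat + y • h) := by
        rw [smul_add, smul_add, smul_smul, smul_smul, add_add_add_comm,
          ← add_smul, ← add_smul, hab, one_smul]
      have hmain := hconv.2 (Set.mem_univ (vhat + x • h)) (Set.mem_univ (vhat + y • h))
        hne' ha hb hab
      rw [← key] at hmain
      simpa only [hg, smul_eq_mul] using hmain
    have hc : HasDerivAt (fun t : ℝ => vhat + t • h) h 0 := by
      have h1 : HasDerivAt (fun t : ℝ => t • h) ((1 : ℝ) • h) 0 :=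
        (hasDerivAt_id (0 : ℝ)).smul_const h
      simpa using h1.const_add vhat
    have hF : HasFDerivAt L (InnerProductSpace.toDual ℝ _ q) vhat :=
      hasGradientAt_iff_hasFDerivAt.mp (hdiff vhat).hasGradientAt
    have hF0 : HasFDerivAt L (InnerProductSpace.toDual ℝ _ q)
        ((fun t : ℝ => vhat + t • h) 0) := by simpa using hF
    have hgd : HasDerivAt g ⟪q, h⟫_ℝ 0 := by
      have := hF0.comp_hasDerivAt 0 hc
      simpa [hg, InnerProductSpace.toDual_apply_apply, Function.comp_def] using this
    have hslope := hgconv.lt_slope_of_hasDerivAt (Set.mem_univ (0 : ℝ))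
      (Set.mem_univ (1 : ℝ)) one_pos hgd
    have hg0 : g 0 = L vhat := by simp [hg]
    have hg1 : g 1 = L (vhat + h) := by simp [hg]
    rw [slope_def_field, hg0, hg1, sub_zero, div_one] at hslope
    linarith
  linarith
end
end

section
/- Let K ⊂ ℝ × ℝ^d be a nonempty compact convex set of points written (s, p), let H : ℝ^d → ℝ be differentiable and strictly convex, let v̄ ∈ ℝ^d and p̄ ∈ ℝ^d satisfy ∇H(p̄) = v̄. Set Φ̄ = min_{(s,p)∈K}(s + ⟨p, v̄⟩) and let S̄ = {(s,p) ∈ K : s + ⟨p, v̄⟩ = Φ̄} be the corresponding face. If p̄ does not belong to the projection {p : ∃s, (s,p) ∈ S̄} of S̄ to the p-coordinate, then M := min_{(s,p)∈K} [ s + ⟨p, v̄⟩ − Φ̄ + ⟨p − p̄, ∇H(p) − v̄⟩ ] > 0. (Lemma 2 of the paper.) -/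
open scoped InnerProductSpace
open Set Filter Topology

section Aux

variable {F : Type*} [NormedAddCommGroup F] [InnerProductSpace ℝ F] [CompleteSpace F]

lemma aux_grad_inner (H : F → ℝ) (x v : F) :
    ⟪gradient H x, v⟫_ℝ = fderiv ℝ H x v :=
  InnerProductSpace.toDual_symm_apply

lemma aux_lineDeriv (H : F → ℝ) (hdiff : Differentiable ℝ H) (x u : F) (t : ℝ) :
    HasDerivAt (fun s : ℝ => H (x + s • u)) ⟪gradient H (x + t • u), u⟫_ℝ t := by
  have hc : HasDerivAt (fun s : ℝ => x + s • u) u t := by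
    simpa using ((hasDerivAt_id t).smul_const u).const_add x
  have h := (hdiff (x + t • u)).hasFDerivAt.comp_hasDerivAt t hc
  rw [aux_grad_inner]
  exact h

lemma aux_grad_le (H : F → ℝ) (hdiff : Differentiable ℝ H) (hconv : ConvexOn ℝ univ H)
    (x y : F) : ⟪gradient H x, y - x⟫_ℝ ≤ H y - H x := by
  set u := y - x with hu
  have hφ : ConvexOn ℝ univ (fun t : ℝ => H (x + t • u)) := by
    have h := hconv.comp_affineMap (AffineMap.lineMap x y)
    rw [Set.preimage_univ] at h
    have heq : (fun t : ℝ => H (x + t • u)) = H ∘ (AffineMap.lineMap x y) := by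
      funext t
      simp only [Function.comp_apply, AffineMap.lineMap_apply_module]
      congr 1
      rw [hu]
      module
    rw [heq]
    exact h
  have h0 : HasDerivAt (fun t : ℝ => H (x + t • u)) ⟪gradient H x, u⟫_ℝ 0 := by
    simpa using aux_lineDeriv H hdiff x u 0
  have hs := hφ.le_slope_of_hasDerivAt (mem_univ (0:ℝ)) (mem_univ (1:ℝ)) one_pos h0
  rw [slope_def_field] at hs
  simp only [one_smul, zero_smul, add_zero] at hs
  have hxy : x + u = y := by rw [hu]; abel
  rw [hxy] at hs
  simpa using hs

lemma aux_grad_strict (H : F → ℝ) (hdiff : Differentiable ℝ H)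
    (hconv : StrictConvexOn ℝ univ H) (x y : F) (hxy : x ≠ y) :
    0 < ⟪gradient H y - gradient H x, y - x⟫_ℝ := by
  set u := y - x with hu
  have hune : u ≠ 0 := sub_ne_zero.2 (Ne.symm hxy)
  have hφd : ∀ t : ℝ, HasDerivAt (fun s : ℝ => H (x + s • u)) ⟪gradient H (x + t • u), u⟫_ℝ t :=
    aux_lineDeriv H hdiff x u
  have hφs : StrictConvexOn ℝ univ (fun t : ℝ => H (x + t • u)) := by
    refine ⟨convex_univ, ?_⟩
    intro a _ b _ hab p q hp hq hpq
    have hpt : x + a • u ≠ x + b • u := by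
      simp only [ne_eq, add_right_inj]
      intro h
      have h0 : (a - b) • u = 0 := by rw [sub_smul, h, sub_self]
      rcases smul_eq_zero.1 h0 with h' | h'
      · exact hab (sub_eq_zero.1 h')
      · exact hune h'
    have h2 := hconv.2 (mem_univ (x + a • u)) (mem_univ (x + b • u)) hpt hp hq hpq
    have key : x + (p * a + q * b) • u = p • (x + a • u) + q • (x + b • u) := by
      match_scalars
      · linarith
      · ring
    calc H (x + (p • a + q • b) • u) = H (p • (x + a • u) + q • (x + b • u)) := by
          rw [smul_eq_mul, smul_eq_mul] at *; rw [key]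
      _ < p * H (x + a • u) + q * H (x + b • u) := h2
      _ = p • H (x + a • u) + q • H (x + b • u) := by simp [smul_eq_mul]
  have hmono := hφs.strictMonoOn_deriv (fun t _ => (hφd t).differentiableAt)
  have h01 : deriv (fun s : ℝ => H (x + s • u)) 0 < deriv (fun s : ℝ => H (x + s • u)) 1 :=
    hmono (mem_univ (0:ℝ)) (mem_univ (1:ℝ)) one_pos
  rw [(hφd 0).deriv, (hφd 1).deriv] at h01
  have e0 : x + (0:ℝ) • u = x := by simp
  have e1 : x + (1:ℝ) • u = y := by rw [one_smul, hu]; abel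
  rw [e0, e1] at h01
  rw [inner_sub_left]
  linarith

lemma aux_exists_min_of_lsc {X : Type*} [TopologicalSpace X] {K : Set X} (hK : IsCompact K)
    (hne : K.Nonempty) (f : X → ℝ)
    (hlsc : ∀ q ∈ K, ∀ c < f q, ∀ᶠ x in nhds q, c < f x)
    (h0 : ∀ q ∈ K, 0 ≤ f q) :
    ∃ q ∈ K, ∀ x ∈ K, f q ≤ f x := by
  by_contra hcon
  push_neg at hcon
  set M := sInf (f '' K) with hM
  have hbdd : BddBelow (f '' K) := ⟨0, by rintro _ ⟨x, hx, rfl⟩; exact h0 x hx⟩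
  have hMle : ∀ q ∈ K, M ≤ f q := fun q hq => csInf_le hbdd ⟨q, hq, rfl⟩
  have hMlt : ∀ q ∈ K, M < f q := by
    intro q hq
    rcases hcon q hq with ⟨x, hx, hfx⟩
    exact lt_of_le_of_lt (hMle x hx) hfx
  have hmem : ∀ q ∈ K, {x | (M + f q) / 2 < f x} ∈ nhds q := by
    intro q hq
    exact hlsc q hq _ (by linarith [hMlt q hq])
  obtain ⟨t, htK, hcov⟩ := hK.elim_nhds_subcover (fun q => {x | (M + f q) / 2 < f x}) hmem
  have htne : t.Nonempty := by
    rcases hne with ⟨x, hx⟩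
    rcases mem_iUnion₂.1 (hcov hx) with ⟨i, hi, _⟩
    exact ⟨i, hi⟩
  set c := t.inf' htne (fun q => (M + f q) / 2) with hc
  have hlb : ∀ y ∈ f '' K, c ≤ y := by
    rintro _ ⟨x, hx, rfl⟩
    rcases mem_iUnion₂.1 (hcov hx) with ⟨i, hi, hxi⟩
    exact le_of_lt (lt_of_le_of_lt (Finset.inf'_le _ hi) hxi)
  have h1 : c ≤ M := le_csInf (hne.image f) hlb
  obtain ⟨i, hi, hci⟩ := Finset.exists_mem_eq_inf' htne (fun q => (M + f q) / 2)
  have h2 : M < c := by rw [hc, hci]; linarith [hMlt i (htK i hi)]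
  linarith

end Aux


/-- Lemma 2 of the paper: if `p̄` is not in the `p`-projection of the face `S̄` of `K`
supported by the direction `v̄ = ∇H(p̄)`, then the minimum `M` over `K` of
`s + ⟨p, v̄⟩ − Φ̄ + ⟨p − p̄, ∇H(p) − v̄⟩` exists and is strictly positive. -/
theorem positive_min_over_superdifferential {d : ℕ}
    (K : Set (ℝ × EuclideanSpace ℝ (Fin d)))
    (hKne : K.Nonempty) (hKcomp : IsCompact K) (hKconv : Convex ℝ K)
    (H : EuclideanSpace ℝ (Fin d) → ℝ)
    (hdiff : Differentiable ℝ H) (hconv : StrictConvexOn ℝ Set.univ H)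
    (vbar pbar : EuclideanSpace ℝ (Fin d)) (hgrad : gradient H pbar = vbar)
    (Φbar : ℝ)
    (hΦ : IsLeast ((fun q : ℝ × EuclideanSpace ℝ (Fin d) => q.1 + ⟪q.2, vbar⟫_ℝ) '' K) Φbar)
    (hproj : pbar ∉ Prod.snd '' {q ∈ K | q.1 + ⟪q.2, vbar⟫_ℝ = Φbar}) :
    ∃ M : ℝ,
      IsLeast ((fun q : ℝ × EuclideanSpace ℝ (Fin d) =>
        q.1 + ⟪q.2, vbar⟫_ℝ - Φbar + ⟪q.2 - pbar, gradient H q.2 - vbar⟫_ℝ) '' K) M ∧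
      0 < M := by
  classical
  set f : ℝ × EuclideanSpace ℝ (Fin d) → ℝ := fun q =>
    q.1 + ⟪q.2, vbar⟫_ℝ - Φbar + ⟪q.2 - pbar, gradient H q.2 - vbar⟫_ℝ with hf
  have hconv' : ConvexOn ℝ univ H := hconv.convexOn
  have hterm2 : ∀ p : EuclideanSpace ℝ (Fin d), 0 ≤ ⟪p - pbar, gradient H p - vbar⟫_ℝ := by
    intro p
    rcases eq_or_ne p pbar with rfl | hne
    · simp
    · have h := aux_grad_strict H hdiff hconv pbar p (Ne.symm hne)
      rw [hgrad] at h
      rw [real_inner_comm]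
      linarith
  have hterm1 : ∀ q ∈ K, 0 ≤ q.1 + ⟪q.2, vbar⟫_ℝ - Φbar := by
    intro q hq
    have h := hΦ.2 ⟨q, hq, rfl⟩
    simp only at h
    linarith
  have hf0 : ∀ q ∈ K, 0 ≤ f q := by
    intro q hq
    have h1 := hterm1 q hq
    have h2 := hterm2 q.2
    simp only [hf]
    linarith
  -- lower semicontinuity
  have hlsc : ∀ q ∈ K, ∀ c < f q, ∀ᶠ x in nhds q, c < f x := by
    intro q hq c hc
    set u := q.2 - pbar with hu
    set φ : ℝ → ℝ := fun s => H (q.2 + s • u) with hφ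
    set L : ℝ := ⟪gradient H q.2, u⟫_ℝ with hL
    have hder : HasDerivAt φ L 0 := by
      have := aux_lineDeriv H hdiff q.2 u 0
      simpa [hφ, hL] using this
    have hslope := hasDerivAt_iff_tendsto_slope.1 hder
    have hneg : Tendsto (fun τ : ℝ => -τ) (𝓝[>] (0:ℝ)) (𝓝[≠] (0:ℝ)) := by
      apply tendsto_nhdsWithin_of_tendsto_nhds_of_eventually_within
      · have h := (continuous_neg.tendsto (0:ℝ)).mono_left (nhdsWithin_le_nhds (s := Set.Ioi 0))
        simpa using h
      · filter_upwards [self_mem_nhdsWithin] with τ hτ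
        simp only [mem_compl_iff, mem_singleton_iff, neg_eq_zero]
        exact ne_of_gt hτ
    have htend : Tendsto (fun τ : ℝ => slope φ 0 (-τ)) (𝓝[>] (0:ℝ)) (𝓝 L) :=
      hslope.comp hneg
    have hev : ∀ᶠ τ in 𝓝[>] (0:ℝ), L - (f q - c) < slope φ 0 (-τ) := by
      have : Ioi (L - (f q - c)) ∈ 𝓝 L := Ioi_mem_nhds (by linarith)
      exact htend this
    obtain ⟨τ, hτs, hτmem⟩ := (hev.and self_mem_nhdsWithin).exists
    have hτpos : (0:ℝ) < τ := hτmem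
    set Fτ : ℝ × EuclideanSpace ℝ (Fin d) → ℝ := fun x =>
      x.1 + ⟪x.2, vbar⟫_ℝ - Φbar + (H x.2 - H (x.2 - τ • (x.2 - pbar))) / τ
        - ⟪x.2 - pbar, vbar⟫_ℝ with hFτ
    have hFcont : Continuous Fτ := by
      apply Continuous.sub
      · apply Continuous.add
        · exact (continuous_fst.add (continuous_snd.inner continuous_const)).sub
            continuous_const
        · exact ((hdiff.continuous.comp continuous_snd).sub
            (hdiff.continuous.comp (continuous_snd.sub
              (((continuous_snd.sub continuous_const)).const_smul τ)))).div_const τ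
      · exact (continuous_snd.sub continuous_const).inner continuous_const
    have hFle : ∀ x, Fτ x ≤ f x := by
      intro x
      set w := x.2 - pbar with hw
      have hkey : (H x.2 - H (x.2 - τ • w)) / τ ≤ ⟪w, gradient H x.2⟫_ℝ := by
        have h := aux_grad_le H hdiff hconv' x.2 (x.2 - τ • w)
        have he : (x.2 - τ • w) - x.2 = -(τ • w) := by abel
        rw [he] at h
        rw [inner_neg_right, real_inner_smul_right] at h
        rw [div_le_iff₀ hτpos]
        rw [real_inner_comm]
        nlinarith
      have hfx : f x = x.1 + ⟪x.2, vbar⟫_ℝ - Φbar + ⟪w, gradient H x.2⟫_ℝ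
          - ⟪w, vbar⟫_ℝ := by
        simp only [hf, hw, inner_sub_right]
        ring
      simp only [hFτ, hfx, hw]
      linarith
    have hFq : c < Fτ q := by
      have hsl : slope φ 0 (-τ) = (H q.2 - H (q.2 - τ • u)) / τ := by
        rw [slope_def_field]
        have he : q.2 + (-τ) • u = q.2 - τ • u := by
          rw [neg_smul]; abel
        simp only [hφ, zero_smul, add_zero, he, sub_zero]
        rw [div_neg, ← neg_div, neg_sub]
      rw [hsl] at hτs
      have h2 : f q = q.1 + ⟪q.2, vbar⟫_ℝ - Φbar + ⟪u, gradient H q.2⟫_ℝ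
          - ⟪u, vbar⟫_ℝ := by
        simp only [hf, hu, inner_sub_right]
        ring
      have h3 : ⟪u, gradient H q.2⟫_ℝ = L := real_inner_comm _ _
      have h4 : Fτ q = q.1 + ⟪q.2, vbar⟫_ℝ - Φbar + (H q.2 - H (q.2 - τ • u)) / τ
          - ⟪u, vbar⟫_ℝ := by
        simp only [hFτ, hu]
      have h5 : Fτ q = f q - L + (H q.2 - H (q.2 - τ • u)) / τ := by
        rw [h4, h2, h3]; ring
      set D := (H q.2 - H (q.2 - τ • u)) / τ with hD
      linarith
    have hopen : IsOpen {x | c < Fτ x} := isOpen_lt continuous_const hFcont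
    filter_upwards [hopen.mem_nhds hFq] with x hx
    exact lt_of_lt_of_le hx (hFle x)
  obtain ⟨q₀, hq₀K, hq₀min⟩ := aux_exists_min_of_lsc hKcomp hKne f hlsc hf0
  refine ⟨f q₀, ⟨⟨q₀, hq₀K, rfl⟩, ?_⟩, ?_⟩
  · rintro y ⟨x, hx, rfl⟩
    exact hq₀min x hx
  · rcases eq_or_ne q₀.2 pbar with heq | hne
    · by_contra hM
      push_neg at hM
      have h1 := hterm1 q₀ hq₀K
      have h2 : ⟪q₀.2 - pbar, gradient H q₀.2 - vbar⟫_ℝ = 0 := by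
        rw [heq]; simp
      have h3 : q₀.1 + ⟪q₀.2, vbar⟫_ℝ = Φbar := by
        simp only [hf, h2] at hM
        linarith
      exact hproj ⟨q₀, ⟨hq₀K, h3⟩, heq⟩
    · have h2 := aux_grad_strict H hdiff hconv pbar q₀.2 (Ne.symm hne)
      rw [hgrad, real_inner_comm] at h2
      have h1 := hterm1 q₀ hq₀K
      simp only [hf]
      linarith
end

section
/- Separation of trajectories from a straight line (abstract form of Lemma 3 of the paper): Let D = [t₀, t₀+T] × B̄(x₀, R) ⊂ ℝ × ℝ^d, let φ : D → ℝ be C¹ with ‖∇φ(t,x)‖ ≤ Λ on D, let G : D × ℝ^d → ℝ^d be continuous, and let p̄, v̄ ∈ ℝ^d, c ∈ ℝ, m > 0 satisfy: (i) ∂_tφ(t,x) + ⟨∇φ(t,x) − p̄, G(t,x,∇φ(t,x))⟩ ≥ c + m for all (t,x) ∈ D; (ii) ∂_tφ(t,Γ(t)) + ⟨∇φ(t,Γ(t)) − p̄, v̄⟩ ≤ c for all t ∈ [t₀, t₀+T], where Γ(t) := x₀ + (t−t₀)·v̄ is assumed to lie in B̄(x₀,R) for such t. Let γ : [t₀, t₀+T]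 → B̄(x₀, R) be C¹ with γ'(t) = G(t, γ(t), ∇φ(t, γ(t))), and let τ ∈ (0, T), δ > 0 with ‖γ(t₀+τ) − Γ(t₀+τ)‖ ≤ δτ. Then for all t ∈ [t₀+τ, t₀+T]: ‖γ(t) − Γ(t)‖ ≥ m·(t − t₀ − τ)/(Λ + ‖p̄‖) − δτ. -/
open scoped InnerProductSpace

set_option maxHeartbeats 1000000

/-- Abstract form of Lemma 3 of the paper: a trajectory of the field
`G(t, x, ∇φ(t,x))` that comes `δτ`-close to the straight line `Γ(t) = x₀ + (t−t₀)v̄`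
at time `t₀ + τ` must separate from it at the stated linear rate afterwards. -/
theorem trajectory_separates_from_line {d : ℕ}
    (t₀ T R Λ c m τ δ : ℝ)
    (x₀ pbar vbar : EuclideanSpace ℝ (Fin d))
    (φ : ℝ → EuclideanSpace ℝ (Fin d) → ℝ)
    (G : ℝ → EuclideanSpace ℝ (Fin d) → EuclideanSpace ℝ (Fin d) →
      EuclideanSpace ℝ (Fin d))
    (γ : ℝ → EuclideanSpace ℝ (Fin d))
    (hT : 0 < T) (hR : 0 < R) (hm : 0 < m) (hτ : 0 < τ) (hτT : τ < T) (hδ : 0 < δ)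
    (hφ : ContDiff ℝ 1 fun q : ℝ × EuclideanSpace ℝ (Fin d) => φ q.1 q.2)
    (hG : Continuous fun q : ℝ × EuclideanSpace ℝ (Fin d) × EuclideanSpace ℝ (Fin d) =>
      G q.1 q.2.1 q.2.2)
    (hΛ : ∀ t ∈ Set.Icc t₀ (t₀ + T), ∀ x ∈ Metric.closedBall x₀ R,
      ‖gradient (φ t) x‖ ≤ Λ)
    (hi : ∀ t ∈ Set.Icc t₀ (t₀ + T), ∀ x ∈ Metric.closedBall x₀ R,
      c + m ≤ deriv (fun s => φ s x) t
        + ⟪gradient (φ t) x - pbar, G t x (gradient (φ t) x)⟫_ℝ)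
    (hΓmem : ∀ t ∈ Set.Icc t₀ (t₀ + T),
      x₀ + (t - t₀) • vbar ∈ Metric.closedBall x₀ R)
    (hii : ∀ t ∈ Set.Icc t₀ (t₀ + T),
      deriv (fun s => φ s (x₀ + (t - t₀) • vbar)) t
        + ⟪gradient (φ t) (x₀ + (t - t₀) • vbar) - pbar, vbar⟫_ℝ ≤ c)
    (hγmem : ∀ t ∈ Set.Icc t₀ (t₀ + T), γ t ∈ Metric.closedBall x₀ R)
    (hγ : ∀ t ∈ Set.Icc t₀ (t₀ + T),
      HasDerivAt γ (G t (γ t) (gradient (φ t) (γ t))) t)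
    (hclose : ‖γ (t₀ + τ) - (x₀ + τ • vbar)‖ ≤ δ * τ) :
    ∀ t ∈ Set.Icc (t₀ + τ) (t₀ + T),
      m * (t - t₀ - τ) / (Λ + ‖pbar‖) - δ * τ ≤ ‖γ t - (x₀ + (t - t₀) • vbar)‖ := by
  set Φ : ℝ × EuclideanSpace ℝ (Fin d) → ℝ := fun q => φ q.1 q.2 with hΦdef
  have hΦd : Differentiable ℝ Φ := hφ.differentiable one_ne_zero
  set L : ℝ → EuclideanSpace ℝ (Fin d) → (ℝ × EuclideanSpace ℝ (Fin d) →L[ℝ] ℝ) := fun t x => fderiv ℝ Φ (t, x) with hLdef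
  -- time partial derivative
  have hder_t : ∀ (t : ℝ) (x : EuclideanSpace ℝ (Fin d)), HasDerivAt (fun s => φ s x) (L t x (1, 0)) t := by
    intro t x
    have h1 : HasDerivAt (fun s : ℝ => (s, x)) ((1 : ℝ), (0 : EuclideanSpace ℝ (Fin d))) t :=
      (hasDerivAt_id t).prodMk (hasDerivAt_const t x)
    exact (hΦd (t, x)).hasFDerivAt.comp_hasDerivAt t h1
  -- spatial fderiv
  have hfs : ∀ (t : ℝ) (x : EuclideanSpace ℝ (Fin d)), HasFDerivAt (φ t)
      ((L t x).comp ((0 : EuclideanSpace ℝ (Fin d) →L[ℝ] ℝ).prod (ContinuousLinearMap.id ℝ (EuclideanSpace ℝ (Fin d))))) x := by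
    intro t x
    exact (hΦd (t, x)).hasFDerivAt.comp x
      ((hasFDerivAt_const t x).prodMk (hasFDerivAt_id x))
  have hφsd : ∀ (t : ℝ) (x : EuclideanSpace ℝ (Fin d)), DifferentiableAt ℝ (φ t) x := fun t x =>
    (hfs t x).differentiableAt
  -- gradient identities
  have hgrad : ∀ (t : ℝ) (x v : EuclideanSpace ℝ (Fin d)), ⟪gradient (φ t) x, v⟫_ℝ = L t x (0, v) := by
    intro t x v
    simp only [gradient]
    rw [InnerProductSpace.toDual_symm_apply, (hfs t x).fderiv]
    simp
  have hgradnorm : ∀ (t : ℝ) (x : EuclideanSpace ℝ (Fin d)), ‖fderiv ℝ (φ t) x‖ = ‖gradient (φ t) x‖ := by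
    intro t x
    simp only [gradient]
    rw [LinearIsometryEquiv.norm_map]
  -- chain rule along a curve
  have hcurve : ∀ (u : ℝ → EuclideanSpace ℝ (Fin d)) (u' : EuclideanSpace ℝ (Fin d)) (t : ℝ), HasDerivAt u u' t →
      HasDerivAt (fun s => φ s (u s)) (L t (u t) (1, u')) t := by
    intro u u' t hu
    exact (hΦd (t, u t)).hasFDerivAt.comp_hasDerivAt t ((hasDerivAt_id t).prodMk hu)
  have hsplit : ∀ (t : ℝ) (x : EuclideanSpace ℝ (Fin d)) (v : EuclideanSpace ℝ (Fin d)), L t x (1, v) = L t x (1, 0) + L t x (0, v) := by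
    intro t x v
    rw [← map_add]
    congr 1
    simp [Prod.ext_iff]
  -- the straight line
  set Γ : ℝ → EuclideanSpace ℝ (Fin d) := fun t => x₀ + (t - t₀) • vbar with hΓdef
  have hΓ' : ∀ t : ℝ, HasDerivAt Γ vbar t := by
    intro t
    have h : HasDerivAt (fun s : ℝ => x₀ + (s - t₀) • vbar) ((1 : ℝ) • vbar) t :=
      (((hasDerivAt_id t).sub_const t₀).smul_const vbar).const_add x₀
    simpa only [one_smul] using h
  -- the comparison function
  set g : ℝ → ℝ := fun t => φ t (γ t) - φ t (Γ t) - ⟪pbar, γ t - Γ t⟫_ℝ with hgdef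
  have hg' : ∀ t ∈ Set.Icc t₀ (t₀ + T), HasDerivAt g
      (L t (γ t) (1, G t (γ t) (gradient (φ t) (γ t))) - L t (Γ t) (1, vbar)
        - ⟪pbar, G t (γ t) (gradient (φ t) (γ t)) - vbar⟫_ℝ) t := by
    intro t ht
    have h1 := hcurve γ _ t (hγ t ht)
    have h2 := hcurve Γ vbar t (hΓ' t)
    have h3 : HasDerivAt (fun s => ⟪pbar, γ s - Γ s⟫_ℝ)
        (⟪pbar, G t (γ t) (gradient (φ t) (γ t)) - vbar⟫_ℝ) t := by
      have := (hasDerivAt_const t pbar).inner ℝ ((hγ t ht).sub (hΓ' t))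
      simpa using this
    exact (h1.sub h2).sub h3
  -- derivative lower bound
  have hgd_ge : ∀ t ∈ Set.Icc t₀ (t₀ + T),
      m ≤ L t (γ t) (1, G t (γ t) (gradient (φ t) (γ t))) - L t (Γ t) (1, vbar)
        - ⟪pbar, G t (γ t) (gradient (φ t) (γ t)) - vbar⟫_ℝ := by
    intro t ht
    have hEq : x₀ + (t - t₀) • vbar = Γ t := rfl
    have e1 := (hder_t t (γ t)).deriv
    have e2 := (hder_t t (Γ t)).deriv
    have h1 := hi t ht (γ t) (hγmem t ht)
    have h2 := hii t ht
    rw [hEq] at h2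
    rw [inner_sub_left] at h1 h2
    rw [hsplit t (γ t) (G t (γ t) (gradient (φ t) (γ t))), hsplit t (Γ t) vbar,
      ← hgrad t (γ t) (G t (γ t) (gradient (φ t) (γ t))), ← hgrad t (Γ t) vbar,
      ← e1, ← e2, inner_sub_right]
    linarith
  -- mean value inequality on [t₀+τ, t₀+T]
  have hsub : Set.Icc (t₀ + τ) (t₀ + T) ⊆ Set.Icc t₀ (t₀ + T) :=
    Set.Icc_subset_Icc (by linarith) le_rfl
  have hcont : ContinuousOn g (Set.Icc (t₀ + τ) (t₀ + T)) := fun s hs =>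
    ((hg' s (hsub hs)).continuousAt).continuousWithinAt
  have hdiff : DifferentiableOn ℝ g (interior (Set.Icc (t₀ + τ) (t₀ + T))) := fun s hs =>
    ((hg' s (hsub (interior_subset hs))).differentiableAt).differentiableWithinAt
  have hderge : ∀ s ∈ interior (Set.Icc (t₀ + τ) (t₀ + T)), m ≤ deriv g s := by
    intro s hs
    rw [(hg' s (hsub (interior_subset hs))).deriv]
    exact hgd_ge s (hsub (interior_subset hs))
  have hMVT := (convex_Icc (t₀ + τ) (t₀ + T)).mul_sub_le_image_sub_of_le_deriv
    hcont hdiff hderge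
  -- pointwise bound on |g|
  have hΛ0 : 0 ≤ Λ := le_trans (norm_nonneg _)
    (hΛ t₀ ⟨le_rfl, by linarith⟩ x₀ (Metric.mem_closedBall_self hR.le))
  have habs : ∀ s ∈ Set.Icc t₀ (t₀ + T), |g s| ≤ (Λ + ‖pbar‖) * ‖γ s - Γ s‖ := by
    intro s hs
    have hφb : ‖φ s (γ s) - φ s (Γ s)‖ ≤ Λ * ‖γ s - Γ s‖ := by
      apply Convex.norm_image_sub_le_of_norm_fderiv_le
        (fun x _ => hφsd s x)
        (fun x hx => by rw [hgradnorm]; exact hΛ s hs x hx)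
        (convex_closedBall x₀ R) (hΓmem s hs) (hγmem s hs)
    have hpb : |⟪pbar, γ s - Γ s⟫_ℝ| ≤ ‖pbar‖ * ‖γ s - Γ s‖ :=
      abs_real_inner_le_norm _ _
    have h1 : |g s| ≤ |φ s (γ s) - φ s (Γ s)| + |⟪pbar, γ s - Γ s⟫_ℝ| :=
      abs_sub _ _
    rw [Real.norm_eq_abs] at hφb
    nlinarith [norm_nonneg (γ s - Γ s)]
  -- conclusion
  intro t ht
  have htI : t ∈ Set.Icc t₀ (t₀ + T) := hsub ht
  have hτI : t₀ + τ ∈ Set.Icc (t₀ + τ) (t₀ + T) := ⟨le_rfl, by linarith⟩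
  have h1 := hMVT (t₀ + τ) hτI t ht ht.1
  have h2 := habs t htI
  have h3 := habs (t₀ + τ) (hsub hτI)
  have h4 : ‖γ (t₀ + τ) - Γ (t₀ + τ)‖ ≤ δ * τ := by
    have hEq : Γ (t₀ + τ) = x₀ + τ • vbar := by
      show x₀ + (t₀ + τ - t₀) • vbar = x₀ + τ • vbar
      congr 1
      rw [add_sub_cancel_left]
    rw [hEq]
    exact hclose
  show m * (t - t₀ - τ) / (Λ + ‖pbar‖) - δ * τ ≤ ‖γ t - Γ t‖
  have hK0 : 0 ≤ Λ + ‖pbar‖ := by positivity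
  have hN0 : 0 ≤ ‖γ t - Γ t‖ := norm_nonneg _
  rcases eq_or_lt_of_le hK0 with hK | hK
  · rw [← hK, div_zero]
    nlinarith
  · rw [sub_le_iff_le_add, div_le_iff₀ hK]
    have he : t - (t₀ + τ) = t - t₀ - τ := by ring
    rw [he] at h1
    have h5 : (Λ + ‖pbar‖) * ‖γ (t₀ + τ) - Γ (t₀ + τ)‖ ≤ (Λ + ‖pbar‖) * (δ * τ) :=
      mul_le_mul_of_nonneg_left h4 hK0
    have h6 := le_abs_self (g t)
    have h7 := neg_abs_le (g (t₀ + τ))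
    nlinarith
end

section
/- Regularity of the conjugate Lagrangian and inversion of Legendre transforms: let H : ℝ^d → ℝ be C¹, strictly convex, and superlinear (H(p)/‖p‖ → ∞ as ‖p‖ → ∞). Then its conjugate L(v) = sup_{p∈ℝ^d}(⟨p, v⟩ − H(p)) is finite everywhere, differentiable, strictly convex, and superlinear, and the gradient maps are mutually inverse bijections of ℝ^d: ∇L(∇H(p)) = p for all p and ∇H(∇L(v)) = v for all v. -/
open scoped InnerProductSpace
open Filter Set Topology

section Aux

variable {d : ℕ}

/-- Gradient inequality for a differentiable convex function. -/
private lemma conj_grad_ineq {H : EuclideanSpace ℝ (Fin d) → ℝ} (hH : Differentiable ℝ H)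
    (hc : ConvexOn ℝ Set.univ H) (x y : EuclideanSpace ℝ (Fin d)) :
    H x + ⟪gradient H x, y - x⟫_ℝ ≤ H y := by
  set g : ℝ → ℝ := fun t => H (AffineMap.lineMap x y t) with hg
  have hgc : ConvexOn ℝ Set.univ g := by
    have := hc.comp_affineMap (AffineMap.lineMap x y (k := ℝ))
    exact this
  have hline : HasDerivAt (fun t : ℝ => (AffineMap.lineMap x y t : EuclideanSpace ℝ (Fin d)))
      (y - x) 0 := by
    have h1 : HasDerivAt (fun t : ℝ => t • (y - x) + x) (y - x) 0 := by
      simpa using ((hasDerivAt_id (0:ℝ)).smul_const (y - x)).add_const x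
    exact h1.congr_of_eventuallyEq (Filter.Eventually.of_forall fun t => by
      simp only [AffineMap.lineMap_apply_module]; module)
  have hHg : HasGradientAt H (gradient H x) x := (hH x).hasGradientAt
  have hF : HasFDerivAt H (InnerProductSpace.toDual ℝ _ (gradient H x)) x :=
    hasGradientAt_iff_hasFDerivAt.mp hHg
  have hgd : HasDerivAt g ⟪gradient H x, y - x⟫_ℝ 0 := by
    have h0 : (AffineMap.lineMap x y (0:ℝ) : EuclideanSpace ℝ (Fin d)) = x := by simp
    have := (h0 ▸ hF).comp_hasDerivAt (0:ℝ) hline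
    simp only [InnerProductSpace.toDual_apply_apply, h0] at this
    exact this
  have hs := hgc.le_slope_of_hasDerivAt (Set.mem_univ (0:ℝ)) (Set.mem_univ (1:ℝ)) zero_lt_one hgd
  have hslope : slope g 0 1 = g 1 - g 0 := by simp [slope_def_field]
  rw [hslope] at hs
  have h1 : g 1 = H y := by simp [hg]
  have h0 : g 0 = H x := by simp [hg]
  rw [h0, h1] at hs
  linarith

/-- At a global maximizer of `p ↦ ⟪p,v⟫ - H p`, the gradient of `H` equals `v`. -/
private lemma conj_max_grad {H : EuclideanSpace ℝ (Fin d) → ℝ} (hH : Differentiable ℝ H)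
    {v p : EuclideanSpace ℝ (Fin d)}
    (hp : ∀ q, ⟪q, v⟫_ℝ - H q ≤ ⟪p, v⟫_ℝ - H p) :
    gradient H p = v := by
  have hFi : HasFDerivAt (fun q : EuclideanSpace ℝ (Fin d) => ⟪q, v⟫_ℝ)
      (innerSL ℝ v) p := by
    have heq : (fun q : EuclideanSpace ℝ (Fin d) => ⟪q, v⟫_ℝ)
        = fun q => (innerSL ℝ v) q := funext fun q => by rw [innerSL_apply_apply, real_inner_comm]
    rw [heq]
    exact (innerSL ℝ v).hasFDerivAt
  have hFH : HasFDerivAt H (InnerProductSpace.toDual ℝ _ (gradient H p)) p :=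
    hasGradientAt_iff_hasFDerivAt.mp (hH p).hasGradientAt
  have hmax : IsLocalMax (fun q => ⟪q, v⟫_ℝ - H q) p :=
    Filter.Eventually.of_forall hp
  have h0 := hmax.hasFDerivAt_eq_zero (hFi.sub hFH)
  apply ext_inner_left ℝ
  intro w
  have := congrArg (fun (f : EuclideanSpace ℝ (Fin d) →L[ℝ] ℝ) => f w) h0
  simp only [ContinuousLinearMap.sub_apply, ContinuousLinearMap.zero_apply,
    innerSL_apply_apply, InnerProductSpace.toDual_apply_apply] at this
  linarith [real_inner_comm w (gradient H p), real_inner_comm w v]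

/-- Injectivity of the gradient of a strictly convex function. -/
private lemma conj_grad_inj {H : EuclideanSpace ℝ (Fin d) → ℝ}
    (hconv : StrictConvexOn ℝ Set.univ H)
    (hgi : ∀ x y, H x + ⟪gradient H x, y - x⟫_ℝ ≤ H y) :
    Function.Injective (gradient H) := by
  intro x y hxy
  by_contra hne
  set m : EuclideanSpace ℝ (Fin d) := (1/2 : ℝ) • x + (1/2 : ℝ) • y with hm
  have hstrict : H m < (1/2 : ℝ) * H x + (1/2 : ℝ) * H y :=
    hconv.2 (mem_univ x) (mem_univ y) hne (by norm_num) (by norm_num) (by norm_num)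
  have h1 := hgi x m
  have h2 := hgi y m
  rw [hxy] at h1
  have hsum : (m - x) + (m - y) = 0 := by
    rw [hm]; module
  have hin : ⟪gradient H y, m - x⟫_ℝ + ⟪gradient H y, m - y⟫_ℝ = 0 := by
    rw [← inner_add_right, hsum, inner_zero_right]
  linarith

/-- Existence of a maximizer for `p ↦ ⟪p,v⟫ - H p` when `H` is superlinear. -/
private lemma conj_exists_max {H : EuclideanSpace ℝ (Fin d) → ℝ} (hH : ContDiff ℝ 1 H)
    (hsuper : Filter.Tendsto (fun p => H p / ‖p‖)
      (Filter.comap (fun p : EuclideanSpace ℝ (Fin d) => ‖p‖) Filter.atTop)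
      Filter.atTop) (v : EuclideanSpace ℝ (Fin d)) :
    ∃ p, ∀ q, ⟪q, v⟫_ℝ - H q ≤ ⟪p, v⟫_ℝ - H p := by
  have hcont : Continuous fun p : EuclideanSpace ℝ (Fin d) => ⟪p, v⟫_ℝ - H p :=
    (continuous_id.inner continuous_const).sub hH.continuous
  apply hcont.exists_forall_ge
  have hco : cocompact (EuclideanSpace ℝ (Fin d))
      = Filter.comap (fun p : EuclideanSpace ℝ (Fin d) => ‖p‖) atTop := by
    rw [comap_norm_atTop, Metric.cobounded_eq_cocompact]
  rw [hco, tendsto_atBot]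
  intro b
  have h1 : ∀ᶠ p : EuclideanSpace ℝ (Fin d) in comap (fun p => ‖p‖) atTop, 1 ≤ ‖p‖ :=
    tendsto_comap.eventually (eventually_ge_atTop 1)
  have h2 := hsuper.eventually (eventually_ge_atTop (‖v‖ + |b| + 1))
  filter_upwards [h1, h2] with p hp1 hp2
  have hp0 : 0 < ‖p‖ := lt_of_lt_of_le one_pos hp1
  rw [le_div_iff₀ hp0] at hp2
  have hinner : ⟪p, v⟫_ℝ ≤ ‖p‖ * ‖v‖ := real_inner_le_norm p v
  nlinarith [neg_abs_le b, abs_nonneg b,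
    mul_nonneg (by positivity : (0:ℝ) ≤ |b| + 1) (by linarith : (0:ℝ) ≤ ‖p‖ - 1)]

end Aux

set_option maxHeartbeats 1000000 in
/-- Regularity of the conjugate Lagrangian and inversion of Legendre transforms:
if `H` is `C¹`, strictly convex and superlinear, then the conjugate
`L(v) = sup_p (⟨p,v⟩ − H(p))` is finite everywhere, differentiable, strictly convex
and superlinear, and `∇L` and `∇H` are mutually inverse bijections of `ℝ^d`. -/
theorem conjugate_regularity_and_inversion {d : ℕ}
    (H : EuclideanSpace ℝ (Fin d) → ℝ)
    (hH : ContDiff ℝ 1 H)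
    (hconv : StrictConvexOn ℝ Set.univ H)
    (hsuper : Filter.Tendsto (fun p => H p / ‖p‖)
      (Filter.comap (fun p : EuclideanSpace ℝ (Fin d) => ‖p‖) Filter.atTop)
      Filter.atTop) :
    ∃ L : EuclideanSpace ℝ (Fin d) → ℝ,
      (∀ v, IsLUB {y : ℝ | ∃ p : EuclideanSpace ℝ (Fin d), y = ⟪p, v⟫_ℝ - H p} (L v)) ∧
      Differentiable ℝ L ∧
      StrictConvexOn ℝ Set.univ L ∧
      Filter.Tendsto (fun v => L v / ‖v‖)
        (Filter.comap (fun v : EuclideanSpace ℝ (Fin d) => ‖v‖) Filter.atTop)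
        Filter.atTop ∧
      Function.Bijective (gradient H) ∧
      Function.Bijective (gradient L) ∧
      (∀ p, gradient L (gradient H p) = p) ∧
      (∀ v, gradient H (gradient L v) = v) := by
  classical
  have hdiff : Differentiable ℝ H := hH.differentiable one_ne_zero
  have hgi : ∀ x y, H x + ⟪gradient H x, y - x⟫_ℝ ≤ H y :=
    conj_grad_ineq hdiff hconv.convexOn
  have hinj : Function.Injective (gradient H) := conj_grad_inj hconv hgi
  have hsurj : Function.Surjective (gradient H) := by
    intro v
    obtain ⟨p, hp⟩ := conj_exists_max hH hsuper v
    exact ⟨p, conj_max_grad hdiff hp⟩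
  have hbij : Function.Bijective (gradient H) := ⟨hinj, hsurj⟩
  set T : EuclideanSpace ℝ (Fin d) → EuclideanSpace ℝ (Fin d) :=
    Function.invFun (gradient H) with hTdef
  have hTr : ∀ v, gradient H (T v) = v := fun v => Function.invFun_eq (hsurj v)
  have hTl : ∀ p, T (gradient H p) = p := fun p => Function.leftInverse_invFun hinj p
  have hTbij : Function.Bijective T := by
    constructor
    · intro a b hab
      rw [← hTr a, hab, hTr]
    · intro p
      exact ⟨gradient H p, hTl p⟩
  -- T v is the unique maximizer of p ↦ ⟪p,v⟫ - H p
  have hmax : ∀ v q, ⟪q, v⟫_ℝ - H q ≤ ⟪T v, v⟫_ℝ - H (T v) := by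
    intro v q
    obtain ⟨p, hp⟩ := conj_exists_max hH hsuper v
    have hpT : p = T v := by
      have hg := conj_max_grad hdiff hp
      rw [← hg, hTl]
    rw [← hpT]
    exact hp q
  set L : EuclideanSpace ℝ (Fin d) → ℝ := fun v => ⟪T v, v⟫_ℝ - H (T v) with hLdef
  -- IsLUB
  have hlub : ∀ v, IsLUB {y : ℝ | ∃ p : EuclideanSpace ℝ (Fin d), y = ⟪p, v⟫_ℝ - H p} (L v) := by
    intro v
    constructor
    · rintro y ⟨p, rfl⟩
      exact hmax v p
    · intro y hy
      exact hy ⟨T v, rfl⟩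
  -- continuity of the gradient of H
  have hgradcont : Continuous (gradient H) := by
    have h1 : Continuous (fderiv ℝ H) := hH.continuous_fderiv one_ne_zero
    exact (InnerProductSpace.toDual ℝ (EuclideanSpace ℝ (Fin d))).symm.continuous.comp h1
  -- properness of the gradient of H
  have hbound : ∀ p, H p - H 0 ≤ ‖gradient H p‖ * ‖p‖ := by
    intro p
    have h := hgi p 0
    have hz : ⟪gradient H p, (0 : EuclideanSpace ℝ (Fin d)) - p⟫_ℝ
        = - ⟪gradient H p, p⟫_ℝ := by
      rw [zero_sub, inner_neg_right]
    rw [hz] at h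
    have h2 : ⟪gradient H p, p⟫_ℝ ≤ ‖gradient H p‖ * ‖p‖ := real_inner_le_norm _ _
    linarith
  have hproper : IsProperMap (gradient H) := by
    rw [isProperMap_iff_isCompact_preimage]
    refine ⟨hgradcont, fun K hK => ?_⟩
    obtain ⟨C, hC⟩ := hK.isBounded.exists_norm_le
    have hev : ∀ᶠ r in atTop, ∀ p : EuclideanSpace ℝ (Fin d), ‖p‖ = r →
        (C + |H 0| + 1) ≤ H p / ‖p‖ :=
      eventually_comap.mp (hsuper.eventually (eventually_ge_atTop (C + |H 0| + 1)))
    obtain ⟨a, ha⟩ := eventually_atTop.mp hev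
    have hsub : gradient H ⁻¹' K ⊆ Metric.closedBall 0 (max a 1) := by
      intro p hp
      simp only [Metric.mem_closedBall, dist_zero_right]
      by_contra hgt
      push_neg at hgt
      have hpa : a ≤ ‖p‖ := le_trans (le_max_left a 1) hgt.le
      have hp1 : 1 ≤ ‖p‖ := le_trans (le_max_right a 1) hgt.le
      have hp0 : 0 < ‖p‖ := lt_of_lt_of_le one_pos hp1
      have hq := ha ‖p‖ hpa p rfl
      rw [le_div_iff₀ hp0] at hq
      have hKp : ‖gradient H p‖ ≤ C := hC _ hp
      have hb := hbound p
      have hCp : ‖gradient H p‖ * ‖p‖ ≤ C * ‖p‖ :=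
        mul_le_mul_of_nonneg_right hKp (norm_nonneg p)
      have hh0 : (|H 0| + 1) * 1 ≤ (|H 0| + 1) * ‖p‖ :=
        mul_le_mul_of_nonneg_left hp1 (by positivity)
      nlinarith [neg_abs_le (H 0), le_abs_self (H 0)]
    exact IsCompact.of_isClosed_subset (isCompact_closedBall 0 (max a 1))
      (hK.isClosed.preimage hgradcont) hsub
  have hclosedmap : IsClosedMap (gradient H) := hproper.isClosedMap
  have hTcont : Continuous T := by
    rw [continuous_iff_isClosed]
    intro C hC
    have himg : T ⁻¹' C = gradient H '' C := by
      ext y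
      constructor
      · intro hy
        exact ⟨T y, hy, hTr y⟩
      · rintro ⟨x, hx, rfl⟩
        rwa [Set.mem_preimage, hTl]
    rw [himg]
    exact hclosedmap C hC
  -- differentiability of L with gradient T
  have hLgrad : ∀ v, HasGradientAt L (T v) v := by
    intro v
    rw [hasGradientAt_iff_hasFDerivAt, hasFDerivAt_iff_isLittleO_nhds_zero]
    rw [Asymptotics.isLittleO_iff]
    intro c hc
    have htd : Filter.Tendsto (fun h : EuclideanSpace ℝ (Fin d) => T (v + h)) (𝓝 0)
        (𝓝 (T v)) := by
      refine (hTcont.tendsto v).comp ?_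
      have : Filter.Tendsto (fun h : EuclideanSpace ℝ (Fin d) => v + h) (𝓝 0) (𝓝 (v + 0)) :=
        (continuous_const.add continuous_id).tendsto 0
      simpa using this
    have hev : ∀ᶠ h : EuclideanSpace ℝ (Fin d) in 𝓝 0, ‖T (v + h) - T v‖ ≤ c := by
      have := htd.eventually (Metric.closedBall_mem_nhds (T v) hc)
      filter_upwards [this] with h hh
      rwa [dist_eq_norm] at hh
    filter_upwards [hev] with h hh
    have hlow : ⟪T v, h⟫_ℝ ≤ L (v + h) - L v := by
      have h1 := hmax (v + h) (T v)
      rw [inner_add_right] at h1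
      simp only [hLdef] at *
      linarith
    have hup : L (v + h) - L v ≤ ⟪T (v + h), h⟫_ℝ := by
      have h1 := hmax v (T (v + h))
      have h2 : ⟪T (v + h), v + h⟫_ℝ = ⟪T (v + h), v⟫_ℝ + ⟪T (v + h), h⟫_ℝ :=
        inner_add_right _ _ _
      simp only [hLdef] at *
      linarith
    have hdiffb : L (v + h) - L v - ⟪T v, h⟫_ℝ ≤ ⟪T (v + h) - T v, h⟫_ℝ := by
      rw [inner_sub_left]
      linarith
    have hcs : ⟪T (v + h) - T v, h⟫_ℝ ≤ ‖T (v + h) - T v‖ * ‖h‖ := real_inner_le_norm _ _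
    have herr : |L (v + h) - L v - ⟪T v, h⟫_ℝ| ≤ c * ‖h‖ := by
      rw [abs_le]
      constructor
      · have : (0:ℝ) ≤ c * ‖h‖ := by positivity
        linarith
      · have : ‖T (v + h) - T v‖ * ‖h‖ ≤ c * ‖h‖ :=
          mul_le_mul_of_nonneg_right hh (norm_nonneg _)
        linarith
    simpa [Real.norm_eq_abs, InnerProductSpace.toDual_apply_apply] using herr
  have hLdiff : Differentiable ℝ L := fun v => (hLgrad v).differentiableAt
  have hgradL : gradient L = T := funext fun v => (hLgrad v).gradient
  -- strict convexity of L
  have hLstrict : StrictConvexOn ℝ Set.univ L := by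
    refine ⟨convex_univ, ?_⟩
    intro x _ y _ hxy a b ha hb hab
    set z : EuclideanSpace ℝ (Fin d) := a • x + b • y with hz
    set p : EuclideanSpace ℝ (Fin d) := T z with hp
    have hzx : ⟪p, x⟫_ℝ - H p ≤ L x := hmax x p
    have hzy : ⟪p, y⟫_ℝ - H p ≤ L y := hmax y p
    have hLz : L z = a * (⟪p, x⟫_ℝ - H p) + b * (⟪p, y⟫_ℝ - H p) := by
      have hin : ⟪p, z⟫_ℝ = a * ⟪p, x⟫_ℝ + b * ⟪p, y⟫_ℝ := by
        rw [hz, inner_add_right, real_inner_smul_right, real_inner_smul_right]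
      simp only [hLdef, ← hp]
      rw [hin]
      linear_combination (H p) * hab
    have hne : ¬(⟪p, x⟫_ℝ - H p = L x ∧ ⟪p, y⟫_ℝ - H p = L y) := by
      rintro ⟨hx1, hy1⟩
      have hgx : gradient H p = x := by
        apply conj_max_grad hdiff
        intro q
        rw [hx1]
        exact hmax x q
      have hgy : gradient H p = y := by
        apply conj_max_grad hdiff
        intro q
        rw [hy1]
        exact hmax y q
      exact hxy (hgx ▸ hgy)
    have hstrict : ⟪p, x⟫_ℝ - H p < L x ∨ ⟪p, y⟫_ℝ - H p < L y := by
      by_contra hcon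
      push_neg at hcon
      exact hne ⟨le_antisymm hzx (hcon.1), le_antisymm hzy (hcon.2)⟩
    simp only [smul_eq_mul]
    rcases hstrict with h | h
    · nlinarith [mul_lt_mul_of_pos_left h ha, mul_le_mul_of_nonneg_left hzy hb.le]
    · nlinarith [mul_le_mul_of_nonneg_left hzx ha.le, mul_lt_mul_of_pos_left h hb]
  -- superlinearity of L
  have hLsuper : Filter.Tendsto (fun v => L v / ‖v‖)
      (Filter.comap (fun v : EuclideanSpace ℝ (Fin d) => ‖v‖) Filter.atTop)
      Filter.atTop := by
    rw [tendsto_atTop]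
    intro b
    obtain ⟨C, hC⟩ := (isCompact_closedBall (0 : EuclideanSpace ℝ (Fin d)) (|b| + 1)
      ).exists_bound_of_continuousOn hH.continuous.continuousOn
    have hC0 : 0 ≤ C := le_trans (norm_nonneg _)
      (hC 0 (by simp [Metric.mem_closedBall]; positivity))
    have h1 : ∀ᶠ v : EuclideanSpace ℝ (Fin d) in comap (fun v => ‖v‖) atTop,
        max 1 C ≤ ‖v‖ := tendsto_comap.eventually (eventually_ge_atTop (max 1 C))
    filter_upwards [h1] with v hv
    have hv1 : 1 ≤ ‖v‖ := le_trans (le_max_left 1 C) hv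
    have hvC : C ≤ ‖v‖ := le_trans (le_max_right 1 C) hv
    have hv0 : 0 < ‖v‖ := lt_of_lt_of_le one_pos hv1
    set p : EuclideanSpace ℝ (Fin d) := (|b| + 1) • ‖v‖⁻¹ • v with hpdef
    have hpnorm : ‖p‖ = |b| + 1 := by
      rw [hpdef, norm_smul, norm_smul, norm_inv, norm_norm, Real.norm_eq_abs,
        abs_of_nonneg (by positivity : (0:ℝ) ≤ |b| + 1), inv_mul_cancel₀ hv0.ne', mul_one]
    have hpball : p ∈ Metric.closedBall (0 : EuclideanSpace ℝ (Fin d)) (|b| + 1) := by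
      rw [Metric.mem_closedBall, dist_zero_right, hpnorm]
    have hHp : H p ≤ C := le_trans (le_abs_self _) (hC p hpball)
    have hip : ⟪p, v⟫_ℝ = (|b| + 1) * ‖v‖ := by
      rw [hpdef, real_inner_smul_left, real_inner_smul_left,
        real_inner_self_eq_norm_mul_norm]
      field_simp
    have hLlow : (|b| + 1) * ‖v‖ - C ≤ L v := by
      have := hmax v p
      rw [hip] at this
      simp only [hLdef] at *
      linarith
    rw [le_div_iff₀ hv0]
    have hkey : 1 * ‖v‖ ≤ (|b| + 1 - b) * ‖v‖ :=
      mul_le_mul_of_nonneg_right (by linarith [le_abs_self b]) (norm_nonneg v)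
    nlinarith [le_abs_self b]
  refine ⟨L, hlub, hLdiff, hLstrict, hLsuper, hbij, ?_, ?_, ?_⟩
  · rw [hgradL]; exact hTbij
  · intro p
    rw [hgradL, hTl]
  · intro v
    rw [hgradL, hTr]
end

section
/- Quadratic case — the admissible velocity is the center of the smallest enclosing ball: let v_i ∈ ℝ^d, i ∈ 𝕀 (𝕀 finite nonempty). Then the function v ↦ max_{i∈𝕀} ‖v − v_i‖² has a unique minimizer v*; setting r = max_{i∈𝕀} ‖v* − v_i‖, every closed ball containing all v_i has radius at least r, and v* ∈ convexHull{v_j : ‖v* − v_j‖ = r}. Equivalently, with L(v) = ‖v‖²/2, p_i = v_i, H_i = ‖v_i‖²/2, the unique admissible velocity in the sense of Theorem 1 equals the center of the smallest closed ball containing all v_i. -/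
open scoped InnerProductSpace

section Aux

variable {d : ℕ} {ι : Type} [Fintype ι] [Nonempty ι]

local notation "E" d => EuclideanSpace ℝ (Fin d)

lemma hasGradAt_half_normSq {F : Type*} [NormedAddCommGroup F] [InnerProductSpace ℝ F]
    [CompleteSpace F] (x : F) : HasGradientAt (fun w => ‖w‖ ^ 2 / 2) x x := by
  have h1 := ((hasFDerivAt_id x).inner ℝ (hasFDerivAt_id x)).const_smul (2⁻¹ : ℝ)
  rw [hasGradientAt_iff_hasFDerivAt]
  convert h1 using 2 with w
  · rfl
  · rfl
  · simp only [Pi.smul_apply, id_eq, smul_eq_mul, real_inner_self_eq_norm_sq]; ring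
  · ext y
    simp [fderivInnerCLM_apply, InnerProductSpace.toDual_apply_apply, real_inner_comm]
    ring

/-- sup of squares equals square of sup, for norms. -/
lemma sup_sq_eq (v : ι → EuclideanSpace ℝ (Fin d)) (w : EuclideanSpace ℝ (Fin d)) :
    (Finset.univ.sup' Finset.univ_nonempty fun i => ‖w - v i‖ ^ 2)
      = (Finset.univ.sup' Finset.univ_nonempty fun i => ‖w - v i‖) ^ 2 := by
  apply le_antisymm
  · apply Finset.sup'_le
    intro i _
    exact pow_le_pow_left₀ (norm_nonneg _) (Finset.le_sup' (fun i => ‖w - v i‖) (Finset.mem_univ i)) 2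
  · obtain ⟨j, _, hj⟩ := Finset.exists_mem_eq_sup' Finset.univ_nonempty
      (fun i => ‖w - v i‖)
    rw [hj]
    exact Finset.le_sup' (fun i => ‖w - v i‖ ^ 2) (Finset.mem_univ j)

/-- The minimizing-index set for the linear functionals is the farthest-point set. -/
lemma farthest_set_eq (v : ι → EuclideanSpace ℝ (Fin d)) (w : EuclideanSpace ℝ (Fin d)) :
    {j | -(‖v j‖ ^ 2 / 2) + ⟪v j, w⟫_ℝ
        = Finset.univ.inf' Finset.univ_nonempty
            fun i => -(‖v i‖ ^ 2 / 2) + ⟪v i, w⟫_ℝ}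
      = {j | ‖w - v j‖ = Finset.univ.sup' Finset.univ_nonempty fun i => ‖w - v i‖} := by
  have hg : ∀ k, -(‖v k‖ ^ 2 / 2) + ⟪v k, w⟫_ℝ = ‖w‖ ^ 2 / 2 - ‖w - v k‖ ^ 2 / 2 := by
    intro k
    have h1 := norm_sub_sq_real w (v k)
    have h2 : ⟪v k, w⟫_ℝ = ⟪w, v k⟫_ℝ := real_inner_comm _ _
    linarith
  ext j
  simp only [Set.mem_setOf_eq]
  constructor
  · intro h
    have hle : ∀ i, ‖w - v i‖ ≤ ‖w - v j‖ := by
      intro i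
      have h1 : -(‖v j‖ ^ 2 / 2) + ⟪v j, w⟫_ℝ ≤ -(‖v i‖ ^ 2 / 2) + ⟪v i, w⟫_ℝ := by
        rw [h]; exact Finset.inf'_le (fun i => -(‖v i‖ ^ 2 / 2) + ⟪v i, w⟫_ℝ) (Finset.mem_univ i)
      have h2 := hg i; have h3 := hg j
      have h4 : ‖w - v i‖ ^ 2 ≤ ‖w - v j‖ ^ 2 := by linarith
      exact le_of_pow_le_pow_left₀ two_ne_zero (norm_nonneg _) h4
    exact le_antisymm (Finset.le_sup' (fun i => ‖w - v i‖) (Finset.mem_univ j))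
      (Finset.sup'_le _ _ fun i _ => hle i)
  · intro h
    have hle : ∀ i, -(‖v j‖ ^ 2 / 2) + ⟪v j, w⟫_ℝ ≤ -(‖v i‖ ^ 2 / 2) + ⟪v i, w⟫_ℝ := by
      intro i
      have h1 : ‖w - v i‖ ≤ ‖w - v j‖ := by
        rw [h]; exact Finset.le_sup' (fun i => ‖w - v i‖) (Finset.mem_univ i)
      have h4 : ‖w - v i‖ ^ 2 ≤ ‖w - v j‖ ^ 2 :=
        pow_le_pow_left₀ (norm_nonneg _) h1 2
      have h2 := hg i; have h3 := hg j
      linarith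
    exact le_antisymm (Finset.le_inf' _ (fun i => -(‖v i‖ ^ 2 / 2) + ⟪v i, w⟫_ℝ) fun i _ => hle i)
      (Finset.inf'_le (fun i => -(‖v i‖ ^ 2 / 2) + ⟪v i, w⟫_ℝ) (Finset.mem_univ j))

/-- Key lemma: a point in the convex hull of its farthest points is a strict minimizer. -/
lemma hull_strict_min (v : ι → EuclideanSpace ℝ (Fin d)) (w : EuclideanSpace ℝ (Fin d))
    (hw : w ∈ convexHull ℝ
      (v '' {j | ‖w - v j‖ = Finset.univ.sup' Finset.univ_nonempty fun i => ‖w - v i‖})) :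
    ∀ u, (Finset.univ.sup' Finset.univ_nonempty fun i => ‖w - v i‖ ^ 2) + ‖u - w‖ ^ 2
        ≤ Finset.univ.sup' Finset.univ_nonempty fun i => ‖u - v i‖ ^ 2 := by
  intro u
  set R : ℝ := Finset.univ.sup' Finset.univ_nonempty fun i => ‖w - v i‖ with hR
  obtain ⟨κ, _, lam, z, hlam0, hlam1, hz, hsum⟩ := mem_convexHull_iff_exists_fintype.1 hw
  have hzR : ∀ k, ‖w - z k‖ = R := by
    intro k
    obtain ⟨j, hj, hjz⟩ := hz k
    rw [← hjz]; exact hj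
  have hzmem : ∀ k, ‖u - z k‖ ^ 2 ≤ Finset.univ.sup' Finset.univ_nonempty
      fun i => ‖u - v i‖ ^ 2 := by
    intro k
    obtain ⟨j, _, hjz⟩ := hz k
    rw [← hjz]; exact Finset.le_sup' (fun i => ‖u - v i‖ ^ 2) (Finset.mem_univ j)
  have hident : ∀ k, ‖u - z k‖ ^ 2
      = ‖u - w‖ ^ 2 + 2 * ⟪u - w, w - z k⟫_ℝ + ‖w - z k‖ ^ 2 := by
    intro k
    have h : u - z k = (u - w) + (w - z k) := by abel
    rw [h, @norm_add_sq_real]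
  -- the cross term vanishes
  have hzero : ∑ k, lam k • (w - z k) = 0 := by
    have : ∑ k, lam k • (w - z k) = (∑ k, lam k) • w - ∑ k, lam k • z k := by
      rw [Finset.sum_smul]
      rw [← Finset.sum_sub_distrib]
      congr 1; ext k; rw [smul_sub]
    rw [this, hlam1, one_smul, hsum, sub_self]
  have hcross : ∑ k, lam k * ⟪u - w, w - z k⟫_ℝ = 0 := by
    have : ∑ k, lam k * ⟪u - w, w - z k⟫_ℝ = ⟪u - w, ∑ k, lam k • (w - z k)⟫_ℝ := by
      rw [inner_sum]
      congr 1; ext k; rw [real_inner_smul_right]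
    rw [this, hzero, inner_zero_right]
  have havg : ∑ k, lam k * ‖u - z k‖ ^ 2 = ‖u - w‖ ^ 2 + R ^ 2 := by
    have h1 : ∑ k, lam k * ‖u - z k‖ ^ 2
        = ∑ k, (lam k * ‖u - w‖ ^ 2 + 2 * (lam k * ⟪u - w, w - z k⟫_ℝ)
            + lam k * R ^ 2) := by
      apply Finset.sum_congr rfl
      intro k _
      rw [hident k, hzR k]; ring
    rw [h1, Finset.sum_add_distrib, Finset.sum_add_distrib, ← Finset.sum_mul,
      ← Finset.mul_sum, ← Finset.sum_mul, hlam1, hcross, one_mul, one_mul, mul_zero]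
    ring
  have hbound : ∑ k, lam k * ‖u - z k‖ ^ 2
      ≤ Finset.univ.sup' Finset.univ_nonempty fun i => ‖u - v i‖ ^ 2 := by
    calc ∑ k, lam k * ‖u - z k‖ ^ 2
        ≤ ∑ k, lam k * (Finset.univ.sup' Finset.univ_nonempty fun i => ‖u - v i‖ ^ 2) := by
          apply Finset.sum_le_sum
          intro k _
          exact mul_le_mul_of_nonneg_left (hzmem k) (hlam0 k)
      _ = Finset.univ.sup' Finset.univ_nonempty fun i => ‖u - v i‖ ^ 2 := by
          rw [← Finset.sum_mul, hlam1, one_mul]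
  rw [sup_sq_eq v w, ← hR]
  linarith [havg, hbound]

end Aux

set_option maxHeartbeats 1600000 in
/-- Quadratic case: the function `v ↦ max_i ‖v − v_i‖²` has a unique minimizer `v*`,
which is the center of the smallest closed ball enclosing all the `v_i`, it lies in the
convex hull of the farthest points, and with `L(v) = ‖v‖²/2`, `p_i = v_i`,
`H_i = ‖v_i‖²/2`, it is the unique admissible velocity in the sense of Theorem 1. -/
theorem smallest_enclosing_ball_is_admissible {d : ℕ}
    {ι : Type} [Fintype ι] [Nonempty ι]
    (v : ι → EuclideanSpace ℝ (Fin d)) :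
    ∃ vstar : EuclideanSpace ℝ (Fin d),
      (∀ w, (Finset.univ.sup' Finset.univ_nonempty fun i => ‖vstar - v i‖ ^ 2)
          ≤ Finset.univ.sup' Finset.univ_nonempty fun i => ‖w - v i‖ ^ 2) ∧
      (∀ w, (∀ u, (Finset.univ.sup' Finset.univ_nonempty fun i => ‖w - v i‖ ^ 2)
          ≤ Finset.univ.sup' Finset.univ_nonempty fun i => ‖u - v i‖ ^ 2) → w = vstar) ∧
      (∀ (c : EuclideanSpace ℝ (Fin d)) (ρ : ℝ),
        (∀ i, v i ∈ Metric.closedBall c ρ) →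
        (Finset.univ.sup' Finset.univ_nonempty fun i => ‖vstar - v i‖) ≤ ρ) ∧
      vstar ∈ convexHull ℝ
        (v '' {j | ‖vstar - v j‖
          = Finset.univ.sup' Finset.univ_nonempty fun i => ‖vstar - v i‖}) ∧
      (gradient (fun w : EuclideanSpace ℝ (Fin d) => ‖w‖ ^ 2 / 2) vstar ∈
        convexHull ℝ (v '' {j | -(‖v j‖ ^ 2 / 2) + ⟪v j, vstar⟫_ℝ
          = Finset.univ.inf' Finset.univ_nonempty
              fun i => -(‖v i‖ ^ 2 / 2) + ⟪v i, vstar⟫_ℝ})) ∧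
      (∀ w, gradient (fun w : EuclideanSpace ℝ (Fin d) => ‖w‖ ^ 2 / 2) w ∈
        convexHull ℝ (v '' {j | -(‖v j‖ ^ 2 / 2) + ⟪v j, w⟫_ℝ
          = Finset.univ.inf' Finset.univ_nonempty
              fun i => -(‖v i‖ ^ 2 / 2) + ⟪v i, w⟫_ℝ}) → w = vstar) := by
  classical
  set f : EuclideanSpace ℝ (Fin d) → ℝ := fun w => Finset.univ.sup' Finset.univ_nonempty fun i => ‖w - v i‖ ^ 2
    with hf
  set Rf : EuclideanSpace ℝ (Fin d) → ℝ := fun w => Finset.univ.sup' Finset.univ_nonempty fun i => ‖w - v i‖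
    with hRf
  have hfR : ∀ w, f w = (Rf w) ^ 2 := fun w => sup_sq_eq v w
  have hf0 : ∀ w, 0 ≤ f w := by
    intro w
    exact le_trans (sq_nonneg _)
      (Finset.le_sup' (fun i => ‖w - v i‖ ^ 2) (Finset.mem_univ (Classical.arbitrary ι)))
  have hfcont : Continuous f := by
    apply Continuous.finset_sup'_apply
    intro i _
    exact ((continuous_id.sub continuous_const).norm.pow 2)
  -- existence of a minimizer
  obtain ⟨vstar, hvK, hminK⟩ : ∃ x ∈ Metric.closedBall (v (Classical.arbitrary ι))
      (f (v (Classical.arbitrary ι)) + 1),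
      IsMinOn f (Metric.closedBall (v (Classical.arbitrary ι))
        (f (v (Classical.arbitrary ι)) + 1)) x := by
    apply (isCompact_closedBall _ _).exists_isMinOn
    · exact ⟨v (Classical.arbitrary ι), Metric.mem_closedBall_self (by linarith [hf0 (v (Classical.arbitrary ι))])⟩
    · exact hfcont.continuousOn
  set i0 := Classical.arbitrary ι
  set R0 : ℝ := f (v i0) + 1 with hR0
  have hmin : ∀ w, f vstar ≤ f w := by
    intro w
    by_cases hwK : w ∈ Metric.closedBall (v i0) R0
    · exact hminK hwK
    · have h1 : R0 < ‖w - v i0‖ := by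
        simp only [Metric.mem_closedBall, not_le, dist_eq_norm] at hwK
        exact hwK
      have h2 : ‖w - v i0‖ ^ 2 ≤ f w := Finset.le_sup' (fun i => ‖w - v i‖ ^ 2) (Finset.mem_univ i0)
      have h3 : f vstar ≤ f (v i0) := hminK (Metric.mem_closedBall_self (by linarith [hf0 (v i0)]))
      nlinarith [hf0 (v i0)]
  -- the minimizer lies in the hull of its farthest points
  have hhull : vstar ∈ convexHull ℝ (v '' {j | ‖vstar - v j‖ = Rf vstar}) := by
    by_contra hnot
    set S : Set (EuclideanSpace ℝ (Fin d)) := v '' {j | ‖vstar - v j‖ = Rf vstar} with hS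
    have hSfin : S.Finite := Set.toFinite _
    have hclosed : IsClosed (convexHull ℝ S) := (hSfin.isCompact_convexHull ℝ).isClosed
    obtain ⟨φ, s, hφ1, hφ2⟩ :=
      geometric_hahn_banach_closed_point (convex_convexHull ℝ S) hclosed hnot
    set u : EuclideanSpace ℝ (Fin d) :=
      (InnerProductSpace.toDual ℝ (EuclideanSpace ℝ (Fin d))).symm φ with hu
    have huφ : ∀ y : EuclideanSpace ℝ (Fin d), ⟪u, y⟫_ℝ = φ y := by
      intro y
      simp [hu, InnerProductSpace.toDual_symm_apply]
    set δ : ℝ := φ vstar - s with hδ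
    have hδpos : 0 < δ := by simp only [hδ]; linarith
    -- per-index epsilon
    set εf : ι → ℝ := fun i =>
      if ‖vstar - v i‖ = Rf vstar then δ / (‖u‖ ^ 2 + 1)
      else (Rf vstar - ‖vstar - v i‖) / (2 * (‖u‖ + 1)) with hεf
    have hεfpos : ∀ i, 0 < εf i := by
      intro i
      simp only [hεf]
      split_ifs with h
      · exact div_pos hδpos (by positivity)
      · have h1 : ‖vstar - v i‖ ≤ Rf vstar := Finset.le_sup' (fun i => ‖vstar - v i‖) (Finset.mem_univ i)
        have h2 : ‖vstar - v i‖ < Rf vstar := lt_of_le_of_ne h1 h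
        exact div_pos (by linarith) (by positivity)
    set ε : ℝ := Finset.univ.inf' Finset.univ_nonempty εf with hε
    have hεpos : 0 < ε := by
      rw [hε, Finset.lt_inf'_iff]
      exact fun i _ => hεfpos i
    have hεle : ∀ i, ε ≤ εf i := fun i => Finset.inf'_le _ (Finset.mem_univ i)
    -- each coordinate strictly decreases
    have hper : ∀ i, ‖(vstar - ε • u) - v i‖ ^ 2 < (Rf vstar) ^ 2 := by
      intro i
      have hexp : ‖(vstar - ε • u) - v i‖ ^ 2
          = ‖vstar - v i‖ ^ 2 - 2 * ε * ⟪u, vstar - v i⟫_ℝ + ε ^ 2 * ‖u‖ ^ 2 := by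
        have h : (vstar - ε • u) - v i = (vstar - v i) - ε • u := by abel
        rw [h, @norm_sub_sq_real, real_inner_smul_right, norm_smul, Real.norm_eq_abs,
          mul_pow, sq_abs, real_inner_comm (vstar - v i) u]
        ring
      by_cases hfar : ‖vstar - v i‖ = Rf vstar
      · -- farthest point: use separation
        have hmemS : v i ∈ S := ⟨i, hfar, rfl⟩
        have hφvi : φ (v i) < s := hφ1 _ (subset_convexHull ℝ S hmemS)
        have hinner : δ ≤ ⟪u, vstar - v i⟫_ℝ := by
          rw [inner_sub_right, huφ, huφ]
          simp only [hδ]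
          linarith
        have hεb : ε ≤ δ / (‖u‖ ^ 2 + 1) := by
          have := hεle i
          simpa only [hεf, if_pos hfar] using this
        have hεu : ε * ‖u‖ ^ 2 < 2 * δ := by
          have h1 : ε * (‖u‖ ^ 2 + 1) ≤ δ := by
            rw [div_eq_mul_inv] at hεb
            have h2 : (0:ℝ) < ‖u‖ ^ 2 + 1 := by positivity
            calc ε * (‖u‖ ^ 2 + 1) ≤ δ * (‖u‖ ^ 2 + 1)⁻¹ * (‖u‖ ^ 2 + 1) :=
                  mul_le_mul_of_nonneg_right hεb (le_of_lt h2)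
              _ = δ := by field_simp
          nlinarith
        rw [hexp, hfar]
        nlinarith [mul_lt_mul_of_pos_left hεu hεpos,
          mul_le_mul_of_nonneg_left hinner (by positivity : (0:ℝ) ≤ 2 * ε)]
      · -- non-farthest point: stays strictly inside
        have h1 : ‖vstar - v i‖ ≤ Rf vstar := Finset.le_sup' (fun i => ‖vstar - v i‖) (Finset.mem_univ i)
        have h2 : ‖vstar - v i‖ < Rf vstar := lt_of_le_of_ne h1 hfar
        have hεb : ε ≤ (Rf vstar - ‖vstar - v i‖) / (2 * (‖u‖ + 1)) := by
          have := hεle i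
          simpa only [hεf, if_neg hfar] using this
        have htri : ‖(vstar - ε • u) - v i‖ ≤ ‖vstar - v i‖ + ε * ‖u‖ := by
          have h : (vstar - ε • u) - v i = (vstar - v i) - ε • u := by abel
          rw [h]
          calc ‖(vstar - v i) - ε • u‖ ≤ ‖vstar - v i‖ + ‖ε • u‖ := norm_sub_le _ _
            _ = ‖vstar - v i‖ + ε * ‖u‖ := by
                rw [norm_smul, Real.norm_eq_abs, abs_of_pos hεpos]
        have hsmall : ε * ‖u‖ < Rf vstar - ‖vstar - v i‖ := by
          have h3 : (0:ℝ) < 2 * (‖u‖ + 1) := by positivity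
          have h4 : ε * (2 * (‖u‖ + 1)) ≤ Rf vstar - ‖vstar - v i‖ := by
            rw [div_eq_mul_inv] at hεb
            calc ε * (2 * (‖u‖ + 1))
                ≤ (Rf vstar - ‖vstar - v i‖) * (2 * (‖u‖ + 1))⁻¹ * (2 * (‖u‖ + 1)) :=
                  mul_le_mul_of_nonneg_right hεb (le_of_lt h3)
              _ = Rf vstar - ‖vstar - v i‖ := by field_simp
          nlinarith [norm_nonneg u, hεpos]
        have hlt : ‖(vstar - ε • u) - v i‖ < Rf vstar := by linarith
        exact pow_lt_pow_left₀ hlt (norm_nonneg _) two_ne_zero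
    have hflt : f (vstar - ε • u) < f vstar := by
      rw [hfR vstar, hf]
      apply (Finset.sup'_lt_iff Finset.univ_nonempty).2
      intro i _
      exact hper i
    exact absurd (hmin (vstar - ε • u)) (not_le.2 hflt)
  -- gradient computation
  have hgrad : ∀ w : EuclideanSpace ℝ (Fin d),
      gradient (fun w : EuclideanSpace ℝ (Fin d) => ‖w‖ ^ 2 / 2) w = w := by
    intro w
    exact (hasGradAt_half_normSq w).gradient
  -- key strict-minimality at vstar
  have hkey := hull_strict_min v vstar hhull
  refine ⟨vstar, ?_, ?_, ?_, hhull, ?_, ?_⟩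
  · intro w
    have := hkey w
    have h2 : (0:ℝ) ≤ ‖w - vstar‖ ^ 2 := sq_nonneg _
    linarith
  · intro w hw
    have h1 := hkey w
    have h2 := hw vstar
    have h3 : ‖w - vstar‖ ^ 2 ≤ 0 := by linarith
    have h4 : ‖w - vstar‖ ^ 2 = 0 := le_antisymm h3 (sq_nonneg _)
    have h5 : ‖w - vstar‖ = 0 := pow_eq_zero_iff two_ne_zero |>.1 h4
    exact sub_eq_zero.1 (norm_eq_zero.1 h5)
  · intro c ρ hc
    have hρ0 : 0 ≤ ρ := le_trans dist_nonneg (hc i0)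
    have hfc : f c ≤ ρ ^ 2 := by
      apply Finset.sup'_le
      intro i _
      have h1 : ‖c - v i‖ ≤ ρ := by
        have := hc i
        rw [Metric.mem_closedBall, dist_eq_norm] at this
        rwa [norm_sub_rev]
      exact pow_le_pow_left₀ (norm_nonneg _) h1 2
    have h2 : (Rf vstar) ^ 2 ≤ ρ ^ 2 := by
      rw [← hfR]; exact le_trans (hmin c) hfc
    exact le_of_pow_le_pow_left₀ two_ne_zero hρ0 h2
  · rw [hgrad vstar, farthest_set_eq v vstar]
    exact hhull
  · intro w hw
    rw [hgrad w, farthest_set_eq v w] at hw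
    have hkw := hull_strict_min v w hw
    have h1 := hkey w
    have h2 := hkw vstar
    have h3 : ‖w - vstar‖ ^ 2 + ‖vstar - w‖ ^ 2 ≤ 0 := by linarith
    have h3' : ‖w - vstar‖ ^ 2 ≤ 0 := by nlinarith [sq_nonneg ‖vstar - w‖]
    have h4 : ‖w - vstar‖ ^ 2 = 0 := le_antisymm h3' (sq_nonneg _)
    exact sub_eq_zero.1 (norm_eq_zero.1 (pow_eq_zero_iff two_ne_zero |>.1 h4))
end

section
/- Existence of a strictly convex Hamiltonian with prescribed values and gradients: let p_i ∈ ℝ^d, i ∈ 𝕀 (𝕀 finite nonempty), be pairwise distinct, and let H_i ∈ ℝ and v_i ∈ ℝ^d satisfy −⟨v_i, p_i⟩ + H_i < −⟨v_i, p_j⟩ + H_j for all i ≠ j. Then there exists a differentiable strictly convex function H : ℝ^d → ℝ such that H(p_i) = H_i and ∇H(p_i) = v_i for every i ∈ 𝕀. -/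
open scoped InnerProductSpace
open Set Filter

/-- `(max t 0)^2`, a C¹ function. -/
noncomputable def reluSq (t : ℝ) : ℝ := max t 0 ^ 2

lemma hasDerivAt_reluSq (s : ℝ) : HasDerivAt reluSq (2 * max s 0) s := by
  rcases lt_trichotomy s 0 with h | h | h
  · have hev : (fun _ : ℝ => (0:ℝ)) =ᶠ[nhds s] reluSq := by
      filter_upwards [Iio_mem_nhds h] with t ht
      simp [reluSq, max_eq_right (le_of_lt (Set.mem_Iio.mp ht))]
    have := (hasDerivAt_const s (0:ℝ)).congr_of_eventuallyEq hev.symm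
    simpa [max_eq_right h.le] using this
  · subst h
    have : HasDerivAt reluSq 0 0 := by
      rw [hasDerivAt_iff_isLittleO]
      simp only [sub_zero, smul_zero, reluSq, max_self, ne_eq, OfNat.ofNat_ne_zero,
        not_false_eq_true, zero_pow, sub_zero]
      refine Asymptotics.isLittleO_iff.2 fun c hc => ?_
      filter_upwards [Metric.ball_mem_nhds (0:ℝ) hc] with t ht
      rw [mem_ball_zero_iff, Real.norm_eq_abs] at ht
      have h1 : max t 0 ≤ |t| := max_le (le_abs_self t) (abs_nonneg t)
      have h2 : (0:ℝ) ≤ max t 0 := le_max_right t 0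
      rw [Real.norm_eq_abs, Real.norm_eq_abs, abs_of_nonneg (by positivity)]
      nlinarith [abs_nonneg t]
    simpa using this
  · have hev : (fun t : ℝ => t ^ 2) =ᶠ[nhds s] reluSq := by
      filter_upwards [Ioi_mem_nhds h] with t ht
      simp [reluSq, max_eq_left (le_of_lt (Set.mem_Ioi.mp ht))]
    have := (hasDerivAt_pow 2 s).congr_of_eventuallyEq hev.symm
    simpa [max_eq_left h.le] using this

/-- C¹ convex function equal to `|t|` for `|t| ≥ δ`. -/
noncomputable def smTheta (δ t : ℝ) : ℝ :=
  t ^ 2 / (2 * δ) + δ / 2 - (reluSq (t - δ) + reluSq (-t - δ)) / (2 * δ)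

lemma smTheta_of_ge {δ t : ℝ} (hδ : 0 < δ) (h : δ ≤ t) : smTheta δ t = t := by
  have h1 : max (t - δ) 0 = t - δ := max_eq_left (by linarith)
  have h2 : max (-t - δ) 0 = 0 := max_eq_right (by linarith)
  rw [smTheta, reluSq, reluSq, h1, h2]
  field_simp
  ring

lemma smTheta_of_le {δ t : ℝ} (hδ : 0 < δ) (h : t ≤ -δ) : smTheta δ t = -t := by
  have h1 : max (t - δ) 0 = 0 := max_eq_right (by linarith)
  have h2 : max (-t - δ) 0 = -t - δ := max_eq_left (by linarith)
  rw [smTheta, reluSq, reluSq, h1, h2]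
  field_simp
  ring

lemma smTheta_le {δ t : ℝ} (hδ : 0 < δ) : smTheta δ t ≤ |t| + δ := by
  rcases le_total t (-δ) with h | h
  · rw [smTheta_of_le hδ h, abs_of_nonpos (by linarith)]; linarith
  rcases le_total δ t with h' | h'
  · rw [smTheta_of_ge hδ h', abs_of_nonneg (by linarith)]; linarith
  · have h1 : max (t - δ) 0 = 0 := max_eq_right (by linarith)
    have h2 : max (-t - δ) 0 = 0 := max_eq_right (by linarith)
    rw [smTheta, reluSq, reluSq, h1, h2]
    have ht : t^2 ≤ δ^2 := by nlinarith
    have h3 : t ^ 2 / (2*δ) ≤ δ/2 := by rw [div_le_iff₀ (by positivity)]; nlinarith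
    have h4 := abs_nonneg t
    norm_num
    linarith

lemma hasDerivAt_smTheta {δ : ℝ} (hδ : 0 < δ) (t : ℝ) :
    HasDerivAt (smTheta δ) (max (min t δ) (-δ) / δ) t := by
  have h1 : HasDerivAt (fun t : ℝ => t ^ 2 / (2 * δ) + δ / 2) (2 * t / (2 * δ)) t := by
    simpa using ((hasDerivAt_pow 2 t).div_const (2 * δ)).add_const (δ / 2)
  have h2 : HasDerivAt (fun t : ℝ => reluSq (t - δ)) (2 * max (t - δ) 0) t := by
    have := (hasDerivAt_reluSq (t - δ)).comp t ((hasDerivAt_id t).sub_const δ)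
    rw [mul_one] at this
    exact this
  have h3 : HasDerivAt (fun t : ℝ => reluSq (-t - δ)) (2 * max (-t - δ) 0 * (-1)) t := by
    exact (hasDerivAt_reluSq (-t - δ)).comp t (((hasDerivAt_id t).neg).sub_const δ)
  have h4 := h1.sub ((h2.add h3).div_const (2 * δ))
  have heq : 2 * t / (2 * δ) - (2 * max (t - δ) 0 + 2 * max (-t - δ) 0 * (-1)) / (2 * δ)
      = max (min t δ) (-δ) / δ := by
    have hcl : t - max (t - δ) 0 + max (-t - δ) 0 = max (min t δ) (-δ) := by
      rcases le_total t (-δ) with h | h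
      · rw [max_eq_right (by linarith), max_eq_left (by linarith),
          min_eq_left (by linarith), max_eq_right (by linarith)]
        ring
      rcases le_total t δ with h' | h'
      · rw [max_eq_right (by linarith), max_eq_right (by linarith),
          min_eq_left h', max_eq_left (by linarith)]
        ring
      · rw [max_eq_left (by linarith), max_eq_right (by linarith),
          min_eq_right h', max_eq_left (by linarith)]
        ring
    rw [← hcl]
    field_simp
    ring
  rw [heq] at h4
  exact h4

lemma differentiable_smTheta {δ : ℝ} (hδ : 0 < δ) : Differentiable ℝ (smTheta δ) :=
  fun t => (hasDerivAt_smTheta hδ t).differentiableAt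

lemma deriv_smTheta {δ : ℝ} (hδ : 0 < δ) (t : ℝ) :
    deriv (smTheta δ) t = max (min t δ) (-δ) / δ := (hasDerivAt_smTheta hδ t).deriv

lemma convexOn_smTheta {δ : ℝ} (hδ : 0 < δ) : ConvexOn ℝ Set.univ (smTheta δ) := by
  apply Monotone.convexOn_univ_of_deriv (differentiable_smTheta hδ)
  intro a b hab
  rw [deriv_smTheta hδ, deriv_smTheta hδ]
  exact div_le_div_of_nonneg_right
    (max_le_max (min_le_min hab le_rfl) le_rfl) hδ.le

lemma monotone_smTheta_add_id {δ : ℝ} (hδ : 0 < δ) : Monotone (fun t => smTheta δ t + t) := by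
  apply monotone_of_deriv_nonneg
  · exact (differentiable_smTheta hδ).add differentiable_id
  · intro x
    have hD : HasDerivAt (fun t => smTheta δ t + t) (max (min x δ) (-δ) / δ + 1) x := by
      exact (hasDerivAt_smTheta hδ x).add (hasDerivAt_id x)
    rw [hD.deriv]
    have h1 : -δ ≤ max (min x δ) (-δ) := le_max_right _ _
    have h2 : -δ / δ ≤ max (min x δ) (-δ) / δ := div_le_div_of_nonneg_right h1 hδ.le
    have h3 : -δ / δ = -1 := by field_simp
    linarith

lemma monotone_id_sub_smTheta {δ : ℝ} (hδ : 0 < δ) : Monotone (fun t => t - smTheta δ t) := by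
  apply monotone_of_deriv_nonneg
  · exact differentiable_id.sub (differentiable_smTheta hδ)
  · intro x
    have hD : HasDerivAt (fun t => t - smTheta δ t) (1 - max (min x δ) (-δ) / δ) x := by
      exact (hasDerivAt_id x).sub (hasDerivAt_smTheta hδ x)
    rw [hD.deriv]
    have h1 : max (min x δ) (-δ) ≤ δ := by
      apply max_le (min_le_right _ _) (by linarith)
    have h2 : max (min x δ) (-δ) / δ ≤ δ / δ := div_le_div_of_nonneg_right h1 hδ.le
    have h3 : δ / δ = (1:ℝ) := by field_simp
    linarith
/-- Smooth maximum: equals `max a b` whenever `|a - b| ≥ δ`. -/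
noncomputable def smMax (δ a b : ℝ) : ℝ := (a + b + smTheta δ (a - b)) / 2

lemma smMax_left {δ a b : ℝ} (hδ : 0 < δ) (h : b + δ ≤ a) : smMax δ a b = a := by
  rw [smMax, smTheta_of_ge hδ (by linarith)]; ring

lemma smMax_right {δ a b : ℝ} (hδ : 0 < δ) (h : a + δ ≤ b) : smMax δ a b = b := by
  rw [smMax, smTheta_of_le hδ (by linarith)]; ring

lemma smMax_le {δ a b C : ℝ} (hδ : 0 < δ) (h1 : a ≤ C) (h2 : b ≤ C) :
    smMax δ a b ≤ C + δ := by
  have hθ := smTheta_le (t := a - b) hδ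
  rw [smMax]
  rcases le_total a b with h | h
  · rw [abs_of_nonpos (by linarith)] at hθ; linarith
  · rw [abs_of_nonneg (by linarith)] at hθ; linarith

lemma smMax_mono_left {δ a a' b : ℝ} (hδ : 0 < δ) (h : a ≤ a') :
    smMax δ a b ≤ smMax δ a' b := by
  have := monotone_smTheta_add_id hδ (show a - b ≤ a' - b by linarith)
  simp only at this
  rw [smMax, smMax]
  linarith

lemma smMax_mono_right {δ a b b' : ℝ} (hδ : 0 < δ) (h : b ≤ b') :
    smMax δ a b ≤ smMax δ a b' := by
  have := monotone_id_sub_smTheta hδ (show a - b' ≤ a - b by linarith)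
  simp only at this
  rw [smMax, smMax]
  linarith

lemma smMax_shift {δ a b s : ℝ} : smMax δ (a - s) (b - s) = smMax δ a b - s := by
  rw [smMax, smMax, show a - s - (b - s) = a - b by ring]
  ring

lemma smMax_comb {δ a b a' b' u w : ℝ} (hδ : 0 < δ) (hu : 0 ≤ u) (hw : 0 ≤ w)
    (huw : u + w = 1) :
    smMax δ (u * a + w * a') (u * b + w * b') ≤ u * smMax δ a b + w * smMax δ a' b' := by
  have hθ := (convexOn_smTheta hδ).2 (Set.mem_univ (a - b)) (Set.mem_univ (a' - b')) hu hw huw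
  simp only [smul_eq_mul] at hθ
  rw [smMax, smMax, smMax,
    show u * a + w * a' - (u * b + w * b') = u * (a - b) + w * (a' - b') by ring]
  linarith

section VectorSpace
variable {E : Type*} [AddCommGroup E] [Module ℝ E]

lemma smMax_strictConvexOn {δ : ℝ} (hδ : 0 < δ) {f g : E → ℝ}
    (hf : StrictConvexOn ℝ Set.univ f) (hg : StrictConvexOn ℝ Set.univ g) :
    StrictConvexOn ℝ Set.univ fun x => smMax δ (f x) (g x) := by
  refine ⟨convex_univ, fun x _ y _ hxy u w hu hw huw => ?_⟩
  simp only [smul_eq_mul]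
  set z := u • x + w • y with hz
  have hF := hf.2 (Set.mem_univ x) (Set.mem_univ y) hxy hu hw huw
  have hG := hg.2 (Set.mem_univ x) (Set.mem_univ y) hxy hu hw huw
  simp only [smul_eq_mul, ← hz] at hF hG
  set F := u * f x + w * f y with hFdef
  set G := u * g x + w * g y with hGdef
  set s := min (F - f z) (G - g z) with hs
  have hs0 : 0 < s := lt_min (by linarith) (by linarith)
  have c1 : smMax δ (f z) (g z) ≤ smMax δ (F - s) (g z) :=
    smMax_mono_left hδ (by have := min_le_left (F - f z) (G - g z); linarith)
  have c2 : smMax δ (F - s) (g z) ≤ smMax δ (F - s) (G - s) :=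
    smMax_mono_right hδ (by have := min_le_right (F - f z) (G - g z); linarith)
  have c3 : smMax δ (F - s) (G - s) = smMax δ F G - s := smMax_shift
  have c4 : smMax δ F G ≤ u * smMax δ (f x) (g x) + w * smMax δ (f y) (g y) :=
    smMax_comb hδ hu.le hw.le huw
  linarith

end VectorSpace

section Normed
variable {E : Type*} [NormedAddCommGroup E] [NormedSpace ℝ E]

lemma smMax_differentiable {δ : ℝ} (hδ : 0 < δ) {f g : E → ℝ}
    (hf : Differentiable ℝ f) (hg : Differentiable ℝ g) :
    Differentiable ℝ fun x => smMax δ (f x) (g x) := by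
  have hθ := differentiable_smTheta hδ
  simp only [smMax]
  fun_prop

end Normed

/-- Iterated smooth max of the functions `f i` over a nonempty list `i :: s`. -/
noncomputable def foldSM {α E : Type*} (δ : ℝ) (f : α → E → ℝ) : α → List α → E → ℝ
  | i, [] => f i
  | i, j :: s => fun x => smMax δ (f i x) (foldSM δ f j s x)

section Fold
variable {α : Type*} {E : Type*}

lemma foldSM_le {δ : ℝ} {f : α → E → ℝ} (hδ : 0 < δ) {x : E} {b : ℝ} :
    ∀ (i : α) (s : List α), f i x ≤ b → (∀ k ∈ s, f k x ≤ b) →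
      foldSM δ f i s x ≤ b + (s.length + 1) * δ
  | i, [] => by
    intro hi _
    simp only [foldSM, List.length_nil]
    push_cast
    linarith
  | i, k :: s' => by
    intro hi hall
    have ih := foldSM_le (δ := δ) (f := f) hδ k s' (hall k List.mem_cons_self)
      (fun m hm => hall m (List.mem_cons_of_mem k hm))
    have hd : (0:ℝ) ≤ ((s'.length : ℝ) + 1) * δ := by positivity
    have h1 : f i x ≤ b + ((s'.length : ℝ) + 1) * δ := by linarith
    have h2 : foldSM δ f i (k :: s') x = smMax δ (f i x) (foldSM δ f k s' x) := rfl
    rw [h2]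
    have := smMax_le hδ h1 ih
    simp only [List.length_cons]
    push_cast
    linarith

lemma foldSM_eq {δ : ℝ} {f : α → E → ℝ} (hδ : 0 < δ) {x : E} {j : α} :
    ∀ (i : α) (s : List α), (i :: s).Nodup → j ∈ i :: s →
      (∀ k ∈ i :: s, k ≠ j → f k x + ((s.length : ℝ) + 2) * δ ≤ f j x) →
      foldSM δ f i s x = f j x
  | i, [] => by
    intro _ hj _
    have : j = i := by simpa using hj
    subst this
    rfl
  | i, k :: s' => by
    intro hnd hj hall
    have h2 : foldSM δ f i (k :: s') x = smMax δ (f i x) (foldSM δ f k s' x) := rfl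
    by_cases hij : i = j
    · subst hij
      have hnotin : i ∉ k :: s' := (List.nodup_cons.mp hnd).1
      have hb : ∀ m ∈ k :: s', f m x ≤ f i x - ((s'.length : ℝ) + 3) * δ := by
        intro m hm
        have hmj : m ≠ i := fun h => hnotin (h ▸ hm)
        have := hall m (List.mem_cons_of_mem i hm) hmj
        simp only [List.length_cons] at this
        push_cast at this ⊢
        linarith
      have hfold : foldSM δ f k s' x ≤
          (f i x - ((s'.length : ℝ) + 3) * δ) + ((s'.length : ℝ) + 1) * δ :=
        foldSM_le hδ k s' (hb k List.mem_cons_self)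
          (fun m hm => hb m (List.mem_cons_of_mem k hm))
      rw [h2]
      exact smMax_left hδ (by linarith)
    · have hjk : j ∈ k :: s' := by
        rcases List.mem_cons.mp hj with h | h
        · exact absurd h.symm hij
        · exact h
      have ih : foldSM δ f k s' x = f j x := by
        apply foldSM_eq hδ k s' (List.nodup_cons.mp hnd).2 hjk
        intro m hm hmj
        have := hall m (List.mem_cons_of_mem i hm) hmj
        simp only [List.length_cons] at this
        push_cast at this ⊢
        nlinarith [Nat.cast_nonneg (α := ℝ) s'.length]
      rw [h2, ih]
      have hi : f i x + ((s'.length : ℝ) + 1 + 2) * δ ≤ f j x := by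
        have := hall i List.mem_cons_self hij
        simp only [List.length_cons] at this
        push_cast at this ⊢
        linarith
      exact smMax_right hδ (by nlinarith [Nat.cast_nonneg (α := ℝ) s'.length])

lemma foldSM_strictConvexOn {δ : ℝ} [AddCommGroup E] [Module ℝ E] {f : α → E → ℝ}
    (hδ : 0 < δ) (hf : ∀ i, StrictConvexOn ℝ Set.univ (f i)) :
    ∀ (i : α) (s : List α), StrictConvexOn ℝ Set.univ (foldSM δ f i s)
  | i, [] => hf i
  | i, k :: s' => smMax_strictConvexOn hδ (hf i) (foldSM_strictConvexOn hδ hf k s')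

lemma foldSM_differentiable {δ : ℝ} [NormedAddCommGroup E] [NormedSpace ℝ E] {f : α → E → ℝ}
    (hδ : 0 < δ) (hf : ∀ i, Differentiable ℝ (f i)) :
    ∀ (i : α) (s : List α), Differentiable ℝ (foldSM δ f i s)
  | i, [] => hf i
  | i, k :: s' => smMax_differentiable hδ (hf i) (foldSM_differentiable hδ hf k s')

end Fold
section Quad
variable {E : Type*} [NormedAddCommGroup E] [InnerProductSpace ℝ E]

lemma aux_strictConvexOn_quad (c : ℝ) (hc : 0 < c) (q : E) :
    StrictConvexOn ℝ Set.univ fun x => c * ⟪x - q, x - q⟫_ℝ := by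
  refine ⟨convex_univ, fun x _ y _ hxy u w hu hw huw => ?_⟩
  simp only [smul_eq_mul]
  have key : u • x + w • y - q = u • (x - q) + w • (y - q) := by
    have hq : q = (u + w) • q := by rw [huw, one_smul]
    rw [smul_sub, smul_sub]
    nth_rewrite 1 [hq]
    rw [add_smul]
    abel
  rw [key]
  set X := x - q with hX
  set Y := y - q with hY
  have hXY : X ≠ Y := by
    intro h
    apply hxy
    have := congrArg (· + q) h
    simpa [hX, hY] using this
  have hpos : (0:ℝ) < ⟪X - Y, X - Y⟫_ℝ :=
    not_le.mp (fun h => (sub_ne_zero.2 hXY) (real_inner_self_nonpos.mp h))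
  have e1 : ⟪u • X + w • Y, u • X + w • Y⟫_ℝ =
      u * u * ⟪X, X⟫_ℝ + 2 * (u * w) * ⟪X, Y⟫_ℝ + w * w * ⟪Y, Y⟫_ℝ := by
    simp only [real_inner_add_add_self, real_inner_smul_left, real_inner_smul_right]
    ring
  have e2 : ⟪X - Y, X - Y⟫_ℝ = ⟪X, X⟫_ℝ - 2 * ⟪X, Y⟫_ℝ + ⟪Y, Y⟫_ℝ :=
    real_inner_sub_sub_self X Y
  rw [e1]
  have huw' : 0 < u * w := mul_pos hu hw
  have key2 : u * (c * ⟪X, X⟫_ℝ) + w * (c * ⟪Y, Y⟫_ℝ)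
      - c * (u * u * ⟪X, X⟫_ℝ + 2 * (u * w) * ⟪X, Y⟫_ℝ + w * w * ⟪Y, Y⟫_ℝ)
      = c * (u * w) * ⟪X - Y, X - Y⟫_ℝ := by
    rw [e2]
    have hw1 : w = 1 - u := by linarith
    rw [hw1]
    ring
  have := mul_pos (mul_pos hc huw') hpos
  linarith

lemma aux_hasFDerivAt_quad (c : ℝ) (q : E) :
    HasFDerivAt (fun x => c * ⟪x - q, x - q⟫_ℝ) (0 : E →L[ℝ] ℝ) q := by
  rw [hasFDerivAt_iff_isLittleO_nhds_zero]
  have heq : ∀ h : E, c * ⟪q + h - q, q + h - q⟫_ℝ - c * ⟪q - q, q - q⟫_ℝ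
      - (0 : E →L[ℝ] ℝ) h = c * ⟪h, h⟫_ℝ := by
    intro h
    simp [add_sub_cancel_left]
  simp only [heq]
  refine Asymptotics.isLittleO_iff.2 fun ε hε => ?_
  have hr : 0 < ε / (|c| + 1) := by positivity
  filter_upwards [Metric.ball_mem_nhds (0 : E) hr] with h hh
  rw [mem_ball_zero_iff] at hh
  rw [real_inner_self_eq_norm_sq]
  have h1 : ‖c * ‖h‖ ^ 2‖ = |c| * ‖h‖ ^ 2 := by
    rw [Real.norm_eq_abs, abs_mul, abs_of_nonneg (pow_nonneg (norm_nonneg h) 2)]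
  rw [h1]
  have h2 : (0:ℝ) ≤ ‖h‖ := norm_nonneg h
  have h3 : (0:ℝ) ≤ |c| := abs_nonneg c
  have h4 : ‖h‖ * (|c| + 1) < ε := (lt_div_iff₀ (by positivity)).mp hh
  nlinarith [mul_le_mul_of_nonneg_left h4.le h2]

lemma aux_convexOn_linear (v : E) (C : ℝ) :
    ConvexOn ℝ Set.univ fun x => ⟪v, x⟫_ℝ + C := by
  refine ⟨convex_univ, fun x _ y _ u w hu hw huw => le_of_eq ?_⟩
  simp only [smul_eq_mul, inner_add_right, real_inner_smul_right]
  have hC : u * C + w * C = C := by rw [← add_mul, huw, one_mul]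
  linarith

end Quad
/-- Existence of a differentiable strictly convex Hamiltonian with prescribed values
`H(p_i) = H_i` and gradients `∇H(p_i) = v_i`, given pairwise distinct momenta `p_i` and
the strict support conditions `−⟨v_i, p_i⟩ + H_i < −⟨v_i, p_j⟩ + H_j` for `i ≠ j`. -/
theorem exists_strictConvex_hamiltonian_with_prescribed_data {d : ℕ}
    {ι : Type} [Fintype ι] [Nonempty ι]
    (p : ι → EuclideanSpace ℝ (Fin d)) (hp : Function.Injective p)
    (Hval : ι → ℝ) (v : ι → EuclideanSpace ℝ (Fin d))
    (hsep : ∀ i j, i ≠ j →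
      -⟪v i, p i⟫_ℝ + Hval i < -⟪v i, p j⟫_ℝ + Hval j) :
    ∃ H : EuclideanSpace ℝ (Fin d) → ℝ,
      Differentiable ℝ H ∧
      StrictConvexOn ℝ Set.univ H ∧
      (∀ i, H (p i) = Hval i) ∧
      (∀ i, gradient H (p i) = v i) := by
  classical
  set n := Fintype.card ι with hn
  set lin : ι → EuclideanSpace ℝ (Fin d) → ℝ :=
    fun k x => ⟪v k, x⟫_ℝ + (Hval k - ⟪v k, p k⟫_ℝ) with hlin
  have hlinself : ∀ j, lin j (p j) = Hval j := fun j => by simp [hlin]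
  have hgap : ∀ j k, j ≠ k → 0 < lin j (p j) - lin k (p j) := by
    intro j k hjk
    have h := hsep k j (Ne.symm hjk)
    simp only [hlin]
    linarith
  set S : Finset ℝ := insert 1 ((Finset.univ.offDiag).image
    fun q : ι × ι => lin q.1 (p q.1) - lin q.2 (p q.1)) with hS
  have hSne : S.Nonempty := Finset.insert_nonempty _ _
  set c := S.min' hSne with hc
  have hcpos : 0 < c := by
    have hmem := S.min'_mem hSne
    rw [← hc, hS, Finset.mem_insert] at hmem
    rcases hmem with h | h
    · rw [h]; norm_num
    · obtain ⟨q, hq, hq2⟩ := Finset.mem_image.mp h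
      rw [← hq2]
      exact hgap q.1 q.2 (Finset.mem_offDiag.mp hq).2.2
  have hcle : ∀ j k, j ≠ k → c ≤ lin j (p j) - lin k (p j) := by
    intro j k h
    apply Finset.min'_le
    rw [hS]
    exact Finset.mem_insert_of_mem (Finset.mem_image.mpr
      ⟨(j, k), Finset.mem_offDiag.mpr ⟨Finset.mem_univ _, Finset.mem_univ _, h⟩, rfl⟩)
  set T : Finset ℝ := insert 1 ((Finset.univ.offDiag).image
    fun q : ι × ι => ‖p q.1 - p q.2‖ ^ 2) with hT
  have hTne : T.Nonempty := Finset.insert_nonempty _ _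
  set P := T.max' hTne with hPdef
  have hP1 : (1 : ℝ) ≤ P := T.le_max' 1 (by rw [hT]; exact Finset.mem_insert_self _ _)
  have hPle : ∀ j k, j ≠ k → ‖p j - p k‖ ^ 2 ≤ P := by
    intro j k h
    apply T.le_max'
    rw [hT]
    exact Finset.mem_insert_of_mem (Finset.mem_image.mpr
      ⟨(j, k), Finset.mem_offDiag.mpr ⟨Finset.mem_univ _, Finset.mem_univ _, h⟩, rfl⟩)
  set ε := c / (2 * P) with hεdef
  have hε : 0 < ε := div_pos hcpos (by linarith)
  have hεb : ∀ j k, j ≠ k → ε * ‖p j - p k‖ ^ 2 ≤ c / 2 := by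
    intro j k h
    have h1 : ε * ‖p j - p k‖ ^ 2 ≤ ε * P := mul_le_mul_of_nonneg_left (hPle j k h) hε.le
    have hP0 : P ≠ 0 := by linarith
    have h2 : ε * P = c / 2 := by rw [hεdef]; field_simp
    linarith
  set δ := c / (2 * ((n : ℝ) + 2)) with hδdef
  have hδ : 0 < δ := div_pos hcpos (by positivity)
  have hnδ : ((n : ℝ) + 1) * δ < c / 2 := by
    rw [hδdef, mul_div_assoc']
    rw [div_lt_div_iff₀ (by positivity) (by norm_num)]
    have : (0:ℝ) ≤ (n : ℝ) := Nat.cast_nonneg n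
    nlinarith
  set f : ι → EuclideanSpace ℝ (Fin d) → ℝ :=
    fun k x => lin k x + ε * ⟪x - p k, x - p k⟫_ℝ with hf
  have hfval : ∀ j, f j (p j) = Hval j := by
    intro j
    simp only [hf, sub_self, inner_zero_left, mul_zero, add_zero]
    exact hlinself j
  have hfdiff : ∀ k, Differentiable ℝ (f k) := by
    intro k
    apply Differentiable.add
    · exact ((differentiable_const (v k)).inner ℝ differentiable_id).add_const _
    · exact (((differentiable_id.sub_const (p k)).inner ℝ
        (differentiable_id.sub_const (p k)))).const_mul ε
  have hfsc : ∀ k, StrictConvexOn ℝ Set.univ (f k) := fun k =>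
    (aux_convexOn_linear (v k) (Hval k - ⟪v k, p k⟫_ℝ)).add_strictConvexOn
      (aux_strictConvexOn_quad ε hε (p k))
  have hgrad : ∀ j, HasFDerivAt (f j)
      (InnerProductSpace.toDual ℝ (EuclideanSpace ℝ (Fin d)) (v j)) (p j) := by
    intro j
    have h0 := (InnerProductSpace.toDual ℝ (EuclideanSpace ℝ (Fin d)) (v j)).hasFDerivAt
      (x := p j)
    have h1 : HasFDerivAt (lin j)
        (InnerProductSpace.toDual ℝ (EuclideanSpace ℝ (Fin d)) (v j)) (p j) := by
      have := h0.add_const (Hval j - ⟪v j, p j⟫_ℝ)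
      simpa [hlin, InnerProductSpace.toDual_apply_apply] using this
    have h2 := aux_hasFDerivAt_quad ε (p j)
    have h3 := h1.add h2
    rw [add_zero] at h3
    exact h3
  have hkey : ∀ j k, k ≠ j → f k (p j) + ((n : ℝ) + 1) * δ < f j (p j) := by
    intro j k hkj
    have h1 : f k (p j) = lin k (p j) + ε * ‖p j - p k‖ ^ 2 := by
      simp only [hf, real_inner_self_eq_norm_sq]
    have h2 : f j (p j) = lin j (p j) := by
      simp only [hf, sub_self, inner_zero_left, mul_zero, add_zero]
    have h3 := hcle j k (Ne.symm hkj)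
    have h4 := hεb j k (Ne.symm hkj)
    rw [h1, h2]
    linarith
  set l := (Finset.univ : Finset ι).toList with hl
  have hlnd : l.Nodup := Finset.nodup_toList _
  have hlmem : ∀ i : ι, i ∈ l := fun i => by
    rw [hl]; exact Finset.mem_toList.mpr (Finset.mem_univ i)
  have hllen : l.length = n := by rw [hl, Finset.length_toList, hn, Finset.card_univ]
  have hlne : l ≠ [] := by
    intro h
    have := hlmem (Classical.arbitrary ι)
    rw [h] at this
    exact absurd this List.not_mem_nil
  obtain ⟨i0, s, hls⟩ := List.exists_cons_of_ne_nil hlne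
  have hev : ∀ j, foldSM δ f i0 s =ᶠ[nhds (p j)] f j := by
    intro j
    have hcont : ∀ k, Continuous (f k) := fun k => (hfdiff k).continuous
    have hev1 : ∀ᶠ x in nhds (p j), ∀ k, k ≠ j → f k x + ((n : ℝ) + 1) * δ < f j x := by
      rw [eventually_all]
      intro k
      by_cases hk : k = j
      · exact Filter.Eventually.of_forall (fun x h => absurd hk h)
      · have ht1 : Filter.Tendsto (fun x => f k x + ((n : ℝ) + 1) * δ) (nhds (p j))
            (nhds (f k (p j) + ((n : ℝ) + 1) * δ)) :=
          (((hcont k).tendsto (p j)).add_const _)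
        have ht2 := (hcont j).tendsto (p j)
        filter_upwards [ht1.eventually_lt ht2 (hkey j k hk)] with x hx _
        exact hx
    filter_upwards [hev1] with x hx
    apply foldSM_eq hδ i0 s (hls ▸ hlnd) (hls ▸ hlmem j)
    intro k hk hkj
    have h5 := hx k hkj
    have hlen : s.length + 1 = n := by rw [← hllen, hls]; rfl
    have hlenR : ((s.length : ℝ) + 2) = (n : ℝ) + 1 := by
      rw [← hlen]
      push_cast
      ring
    rw [hlenR]
    linarith
  refine ⟨foldSM δ f i0 s, foldSM_differentiable hδ hfdiff i0 s,
    foldSM_strictConvexOn hδ hfsc i0 s, ?_, ?_⟩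
  · intro j
    rw [(hev j).eq_of_nhds]
    exact hfval j
  · intro j
    have hH : HasFDerivAt (foldSM δ f i0 s)
        (InnerProductSpace.toDual ℝ (EuclideanSpace ℝ (Fin d)) (v j)) (p j) :=
      (hgrad j).congr_of_eventuallyEq (hev j)
    have hG := hasFDerivAt_iff_hasGradientAt.mp hH
    rw [LinearIsometryEquiv.symm_apply_apply] at hG
    exact hG.gradient
end
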